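/- arXiv:2003.03451 — 5 statements merged into one kernel-verified Lean document; each statement's English description precedes it below -/
import Mathlib

section
/- Let (X, d, ≪, ≤, τ) and (Y, d̃, ≪̃, ≤̃, τ̃) be Lorentzian length spaces such that X is strongly causal and the metric space (Y, d̃) is locally compact, and let f : X → Y be a surjective distance homothetic map. Then f is a homeomorphism (with respect to the metric topologies) and Y is strongly causal. -/
open scoped NNReal ENNReal
open Set Filter Topology

/-- A Lorentzian pre-length space: a causal space `(X, ≪, ≤)` carried by a metric space `X`,
together with a time separation function `τ : X × X → [0, ∞]`. -/
structure LorentzianPreLengthSpace (X : Type*) [MetricSpace X] where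
  /-- The chronological relation `≪`. -/
  chron : X → X → Prop
  /-- The causal relation `≤`. -/
  causal : X → X → Prop
  chron_trans : ∀ {x y z : X}, chron x y → chron y z → chron x z
  causal_refl : ∀ x : X, causal x x
  causal_trans : ∀ {x y z : X}, causal x y → causal y z → causal x z
  chron_imp_causal : ∀ {x y : X}, chron x y → causal x y
  /-- The time separation function `τ`. -/
  tau : X → X → ℝ≥0∞
  tau_lsc : LowerSemicontinuous fun p : X × X => tau p.1 p.2
  tau_rev_triangle : ∀ {x y z : X}, causal x y → causal y z → tau x y + tau y z ≤ tau x z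
  tau_eq_zero : ∀ {x y : X}, ¬ causal x y → tau x y = 0
  tau_pos_iff : ∀ {x y : X}, 0 < tau x y ↔ chron x y

namespace LorentzianPreLengthSpace

variable {X : Type*} [MetricSpace X] (L : LorentzianPreLengthSpace X)

/-- Chronological future `I⁺(x)`. -/
def Iplus (x : X) : Set X := {y | L.chron x y}

/-- Chronological past `I⁻(x)`. -/
def Iminus (x : X) : Set X := {y | L.chron y x}

/-- Causal future `J⁺(x)`. -/
def Jplus (x : X) : Set X := {y | L.causal x y}

/-- Causal past `J⁻(x)`. -/
def Jminus (x : X) : Set X := {y | L.causal y x}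

/-- A future directed causal curve on `[a,b]`: non-constant, Lipschitz, and order preserving
from the order of `[a,b]` to the causal relation. -/
def IsFutureCausalCurve (γ : ℝ → X) (a b : ℝ) : Prop :=
  a < b ∧ (∃ K : ℝ≥0, LipschitzOnWith K γ (Icc a b)) ∧
    (∃ s ∈ Icc a b, ∃ t ∈ Icc a b, γ s ≠ γ t) ∧
    ∀ ⦃s⦄, s ∈ Icc a b → ∀ ⦃t⦄, t ∈ Icc a b → s < t → L.causal (γ s) (γ t)

/-- A future directed timelike curve on `[a,b]`. -/
def IsFutureTimelikeCurve (γ : ℝ → X) (a b : ℝ) : Prop :=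
  a < b ∧ (∃ K : ℝ≥0, LipschitzOnWith K γ (Icc a b)) ∧
    (∃ s ∈ Icc a b, ∃ t ∈ Icc a b, γ s ≠ γ t) ∧
    ∀ ⦃s⦄, s ∈ Icc a b → ∀ ⦃t⦄, t ∈ Icc a b → s < t → L.chron (γ s) (γ t)

/-- The `τ`-length of a curve: the infimum over all partitions
`a = t₀ < t₁ < ⋯ < t_N = b` (with `N ≥ 1`) of `∑ τ(γ(tᵢ), γ(tᵢ₊₁))`. -/
noncomputable def tauLength (γ : ℝ → X) (a b : ℝ) : ℝ≥0∞ :=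
  ⨅ n : ℕ, ⨅ t : {t : Fin (n + 2) → ℝ // StrictMono t ∧ t 0 = a ∧ t (Fin.last (n + 1)) = b},
    ∑ i : Fin (n + 1), L.tau (γ (t.1 i.castSucc)) (γ (t.1 i.succ))

/-- Causal path connectedness: causally related (distinct) points are joined by a future
directed causal curve, chronologically related points by a future directed timelike curve. -/
def CausallyPathConnected : Prop :=
  (∀ x y : X, L.causal x y → x ≠ y →
      ∃ γ : ℝ → X, ∃ a b : ℝ, L.IsFutureCausalCurve γ a b ∧ γ a = x ∧ γ b = y) ∧
  (∀ x y : X, L.chron x y →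
      ∃ γ : ℝ → X, ∃ a b : ℝ, L.IsFutureTimelikeCurve γ a b ∧ γ a = x ∧ γ b = y)

/-- `p ≤_U q`: there is a future directed causal curve from `p` to `q` with image in `U`. -/
def CausalInside (U : Set X) (p q : X) : Prop :=
  ∃ γ : ℝ → X, ∃ a b : ℝ, L.IsFutureCausalCurve γ a b ∧ γ a = p ∧ γ b = q ∧ γ '' Icc a b ⊆ U

/-- `U` is causally closed: the relation `≤_U` is closed under limits inside `U`. -/
def CausallyClosedNbhd (U : Set X) : Prop :=
  ∀ (p q : X) (pn qn : ℕ → X), (∀ n, L.CausalInside U (pn n) (qn n)) →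
    Tendsto pn atTop (𝓝 p) → Tendsto qn atTop (𝓝 q) → p ∈ U → q ∈ U → L.CausalInside U p q

/-- Every point has a causally closed open neighborhood. -/
def LocallyCausallyClosed : Prop :=
  ∀ x : X, ∃ U : Set X, IsOpen U ∧ x ∈ U ∧ L.CausallyClosedNbhd U

/-- Localizability: every point has a localizing open neighborhood `Ω`. -/
def Localizable : Prop :=
  ∀ x : X, ∃ Ω : Set X, IsOpen Ω ∧ x ∈ Ω ∧
    (∃ C : ℝ≥0, ∀ (γ : ℝ → X) (a b : ℝ), L.IsFutureCausalCurve γ a b →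
        γ '' Icc a b ⊆ Ω → eVariationOn γ (Icc a b) ≤ C) ∧
    ∃ ω : X → X → ℝ≥0∞,
      ContinuousOn (fun pq : X × X => ω pq.1 pq.2) (Ω ×ˢ Ω) ∧
      (∀ p ∈ Ω, ∀ q ∈ Ω, ω p q ≠ ⊤) ∧
      (∀ p ∈ Ω, ∀ q ∈ Ω, ∀ r ∈ Ω, L.causal p q → L.causal q r → ω p q + ω q r ≤ ω p r) ∧
      (∀ p ∈ Ω, ∀ q ∈ Ω, ¬ L.causal p q → ω p q = 0) ∧
      (∀ p ∈ Ω, ∀ q ∈ Ω, (0 < ω p q ↔ L.chron p q)) ∧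
      (∀ y ∈ Ω, (L.Iplus y ∩ Ω).Nonempty ∧ (L.Iminus y ∩ Ω).Nonempty) ∧
      (∀ p ∈ Ω, ∀ q ∈ Ω, L.causal p q → p ≠ q →
        ∃ γ : ℝ → X, ∃ a b : ℝ, L.IsFutureCausalCurve γ a b ∧ γ a = p ∧ γ b = q ∧
          γ '' Icc a b ⊆ Ω ∧ L.tauLength γ a b = ω p q ∧
          ∀ (σ : ℝ → X) (c e : ℝ), L.IsFutureCausalCurve σ c e → σ c = p → σ e = q →
            σ '' Icc c e ⊆ Ω → L.tauLength σ c e ≤ L.tauLength γ a b)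

/-- `L` is a Lorentzian length space: causally path connected, locally causally closed,
localizable, and `τ` is the supremum of `τ`-lengths of connecting causal curves
(the supremum of the empty set being `0`). -/
def IsLengthSpace : Prop :=
  L.CausallyPathConnected ∧ L.LocallyCausallyClosed ∧ L.Localizable ∧
    ∀ x y : X, L.tau x y = sSup {ℓ : ℝ≥0∞ | ∃ γ : ℝ → X, ∃ a b : ℝ,
      L.IsFutureCausalCurve γ a b ∧ γ a = x ∧ γ b = y ∧ ℓ = L.tauLength γ a b}

/-- `K⁺`: the smallest closed and transitive relation containing `J⁺`. -/
def Kplus : Set (X × X) :=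
  ⋂₀ {R : Set (X × X) | IsClosed R ∧ (∀ a b c : X, (a, b) ∈ R → (b, c) ∈ R → (a, c) ∈ R) ∧
      {pq : X × X | L.causal pq.1 pq.2} ⊆ R}

/-- The Alexandrov topology, generated by the chronological diamonds. -/
def AlexandrovTopology : TopologicalSpace X :=
  TopologicalSpace.generateFrom {s : Set X | ∃ x y : X, s = L.Iplus x ∩ L.Iminus y}

/-- Strong causality: the Alexandrov topology coincides with the metric topology. -/
def StronglyCausal : Prop :=
  L.AlexandrovTopology = (inferInstance : TopologicalSpace X)

/-- Non-total imprisonment: causal curves in a compact set have uniformly bounded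
`d`-arclength. -/
def NonTotallyImprisoning : Prop :=
  ∀ K : Set X, IsCompact K → ∃ C : ℝ≥0, ∀ (γ : ℝ → X) (a b : ℝ),
    L.IsFutureCausalCurve γ a b → γ '' Icc a b ⊆ K → eVariationOn γ (Icc a b) ≤ C

/-- Global hyperbolicity. -/
def GloballyHyperbolic : Prop :=
  L.NonTotallyImprisoning ∧ ∀ x y : X, IsCompact (L.Jplus x ∩ L.Jminus y)

/-- Causality: the causal relation is antisymmetric. -/
def Causal : Prop := ∀ x y : X, L.causal x y → L.causal y x → x = y

/-- Causal simplicity. -/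
def CausallySimple : Prop :=
  L.Causal ∧ ∀ x : X, IsClosed (L.Jplus x) ∧ IsClosed (L.Jminus x)

/-- Distinguishing. -/
def Distinguishing : Prop :=
  (∀ x y : X, L.Iplus x = L.Iplus y → x = y) ∧ (∀ x y : X, L.Iminus x = L.Iminus y → x = y)

/-- Reflectivity. -/
def Reflective : Prop :=
  (∀ x y : X, L.Iplus x ⊆ L.Iplus y → L.Iminus y ⊆ L.Iminus x) ∧
  (∀ x y : X, L.Iminus y ⊆ L.Iminus x → L.Iplus x ⊆ L.Iplus y)

/-- Causal continuity. -/
def CausallyContinuous : Prop := L.Distinguishing ∧ L.Reflective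

/-- Stable causality: `K⁺` is antisymmetric. -/
def StablyCausal : Prop := ∀ x y : X, (x, y) ∈ L.Kplus → (y, x) ∈ L.Kplus → x = y

end LorentzianPreLengthSpace

/-- A distance homothetic map: `τ̃(f p, f q) = c · τ(p, q)` for some constant `c > 0`. -/
def DistanceHomothetic {X Y : Type*} [MetricSpace X] [MetricSpace Y]
    (LX : LorentzianPreLengthSpace X) (LY : LorentzianPreLengthSpace Y) (f : X → Y) : Prop :=
  ∃ c : ℝ≥0, 0 < c ∧ ∀ p q : X, LY.tau (f p) (f q) = (c : ℝ≥0∞) * LX.tau p q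

/-- A locally causally Lipschitz map. -/
def LocallyCausallyLipschitz {X Y : Type*} [MetricSpace X] [MetricSpace Y]
    (LX : LorentzianPreLengthSpace X) (f : X → Y) : Prop :=
  ∀ x : X, ∃ U : Set X, IsOpen U ∧ x ∈ U ∧ ∃ M : ℝ, 0 < M ∧
    ∀ x1 ∈ U, ∀ x2 ∈ U, LX.causal x1 x2 → dist (f x1) (f x2) ≤ M * dist x1 x2


section AuxiliaryLemmas

variable {Z : Type*} [MetricSpace Z]

/-- The chronological future is open, by lower semicontinuity of `τ`. -/
lemma LorentzianPreLengthSpace.isOpen_Iplus (L : LorentzianPreLengthSpace Z) (x : Z) :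
    IsOpen (L.Iplus x) := by
  have hO : IsOpen ((fun p : Z × Z => L.tau p.1 p.2) ⁻¹' Set.Ioi 0) :=
    L.tau_lsc.isOpen_preimage 0
  have hEq : L.Iplus x
      = (fun y => (x, y)) ⁻¹' ((fun p : Z × Z => L.tau p.1 p.2) ⁻¹' Set.Ioi 0) := by
    ext y
    simp only [LorentzianPreLengthSpace.Iplus, Set.mem_setOf_eq, Set.mem_preimage, Set.mem_Ioi]
    exact L.tau_pos_iff.symm
  rw [hEq]
  exact hO.preimage (Continuous.prodMk_right x)

/-- The chronological past is open, by lower semicontinuity of `τ`. -/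
lemma LorentzianPreLengthSpace.isOpen_Iminus (L : LorentzianPreLengthSpace Z) (x : Z) :
    IsOpen (L.Iminus x) := by
  have hO : IsOpen ((fun p : Z × Z => L.tau p.1 p.2) ⁻¹' Set.Ioi 0) :=
    L.tau_lsc.isOpen_preimage 0
  have hEq : L.Iminus x
      = (fun y => (y, x)) ⁻¹' ((fun p : Z × Z => L.tau p.1 p.2) ⁻¹' Set.Ioi 0) := by
    ext y
    simp only [LorentzianPreLengthSpace.Iminus, Set.mem_setOf_eq, Set.mem_preimage, Set.mem_Ioi]
    exact L.tau_pos_iff.symm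
  rw [hEq]
  exact hO.preimage (continuous_id.prodMk continuous_const)

end AuxiliaryLemmas

/-- if `X` is a strongly causal Lorentzian length space, `Y` a Lorentzian
length space with locally compact metric, and `f : X → Y` a surjective distance homothetic
map, then `f` is a homeomorphism and `Y` is strongly causal. -/
theorem distanceHomothetic_homeomorph_stronglyCausal {X Y : Type*}
    [MetricSpace X] [MetricSpace Y] [LocallyCompactSpace Y]
    (LX : LorentzianPreLengthSpace X) (LY : LorentzianPreLengthSpace Y)
    (hX : LX.IsLengthSpace) (hY : LY.IsLengthSpace) (hXsc : LX.StronglyCausal)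
    (f : X → Y) (hsurj : Function.Surjective f) (hhom : DistanceHomothetic LX LY f) :
    (∃ h : X ≃ₜ Y, ⇑h = f) ∧ LY.StronglyCausal := by
  classical
  obtain ⟨c, hcpos, hτ⟩ := hhom
  have hc0 : (c : ℝ≥0∞) ≠ 0 := by exact_mod_cast hcpos.ne'
  -- `f` preserves the chronological relation in both directions
  have hchron : ∀ p q : X, LX.chron p q ↔ LY.chron (f p) (f q) := by
    intro p q
    rw [← LX.tau_pos_iff, ← LY.tau_pos_iff, hτ, pos_iff_ne_zero, pos_iff_ne_zero,
      Ne, Ne, mul_eq_zero]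
    simp [hc0]
  -- injectivity of `f`
  have hinj : Function.Injective f := by
    intro p q hpq
    by_contra hne
    have hiff : ∀ s : Set X,
        TopologicalSpace.GenerateOpen {s : Set X | ∃ a b, s = LX.Iplus a ∩ LX.Iminus b} s →
        (p ∈ s ↔ q ∈ s) := by
      intro s hs
      induction hs with
      | basic u hu =>
        obtain ⟨a, b, rfl⟩ := hu
        simp only [Set.mem_inter_iff, LorentzianPreLengthSpace.Iplus,
          LorentzianPreLengthSpace.Iminus, Set.mem_setOf_eq]
        rw [hchron a p, hchron p b, hpq, ← hchron a q, ← hchron q b]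
      | univ => simp
      | inter u v _ _ ihu ihv => simp only [Set.mem_inter_iff, ihu, ihv]
      | sUnion C _ ih =>
        simp only [Set.mem_sUnion]
        exact ⟨fun ⟨t, ht, hp⟩ => ⟨t, ht, (ih t ht).mp hp⟩,
          fun ⟨t, ht, hq⟩ => ⟨t, ht, (ih t ht).mpr hq⟩⟩
    have hop : IsOpen[LX.AlexandrovTopology] ({q}ᶜ : Set X) := by
      rw [hXsc]; exact isOpen_compl_singleton
    have hq : q ∈ ({q}ᶜ : Set X) := (hiff _ hop).mp (by simpa using hne)
    simp at hq
  have hbij : Function.Bijective f := ⟨hinj, hsurj⟩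
  let e : X ≃ Y := Equiv.ofBijective f hbij
  have hfg : ∀ w : Y, f (e.symm w) = w := fun w => e.apply_symm_apply w
  have hgf : ∀ x : X, e.symm (f x) = x := fun x => e.symm_apply_apply x
  -- `e.symm` is continuous
  have hgc : Continuous (e.symm : Y → X) := by
    have h1 : Continuous[_, LX.AlexandrovTopology] (e.symm : Y → X) := by
      apply continuous_generateFrom_iff.mpr
      rintro s ⟨a, b, rfl⟩
      have hEq : (e.symm : Y → X) ⁻¹' (LX.Iplus a ∩ LX.Iminus b)
          = LY.Iplus (f a) ∩ LY.Iminus (f b) := by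
        ext w
        simp only [Set.mem_preimage, Set.mem_inter_iff, LorentzianPreLengthSpace.Iplus,
          LorentzianPreLengthSpace.Iminus, Set.mem_setOf_eq]
        rw [hchron a (e.symm w), hchron (e.symm w) b, hfg w]
      rw [hEq]
      exact (LY.isOpen_Iplus _).inter (LY.isOpen_Iminus _)
    rwa [hXsc] at h1
  -- `f` is continuous
  have hfc : Continuous f := by
    rw [continuous_iff_continuousAt]
    intro x
    have main : ∀ ε : ℝ, 0 < ε →
        ∃ U : Set X, IsOpen U ∧ x ∈ U ∧ ∀ x' ∈ U, dist (f x') (f x) < ε := by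
      intro ε hε
      by_contra hcon
      push_neg at hcon
      haveI : Nonempty X := ⟨x⟩
      obtain ⟨K, hKc, hKn⟩ := exists_compact_mem_nhds (f x)
      obtain ⟨r₀, hr₀, hballK⟩ := Metric.nhds_basis_closedBall.mem_iff.mp hKn
      set r : ℝ := min r₀ (ε / 2) with hrdef
      have hr : 0 < r := lt_min hr₀ (by linarith)
      have hrK : Metric.closedBall (f x) r ⊆ K := fun z hz =>
        hballK (Metric.closedBall_subset_closedBall (min_le_left _ _) hz)
      have hrε : r < ε := lt_of_le_of_lt (min_le_right _ _) (by linarith)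
      obtain ⟨Ω, hΩo, hyΩ, -, ω, -, -, -, -, -, hIpm, -⟩ := hY.2.2.1 (f x)
      obtain ⟨⟨b₀, hb₀y, -⟩, a₀, ha₀y, -⟩ := hIpm (f x) hyΩ
      obtain ⟨γ, A₁, B₁, hγ, hγA, hγB⟩ := hY.1.2 a₀ (f x) ha₀y
      obtain ⟨δ, A₂, B₂, hδ, hδA, hδB⟩ := hY.1.2 (f x) b₀ hb₀y
      obtain ⟨hAB₁, ⟨K₁, hLip₁⟩, -, hγch⟩ := hγ
      obtain ⟨hAB₂, ⟨K₂, hLip₂⟩, -, hδch⟩ := hδ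
      have key : ∀ m : ℕ, ∃ z : Y, dist z (f x) = r ∧ dist (e.symm z) x < 1 / (m + 1) := by
        intro m
        have hm : (0:ℝ) < 1 / (m + 1) := by positivity
        obtain ⟨v, ⟨T, ⟨hTfin, hTS⟩, rfl⟩, hxv, hvball⟩ :=
          (TopologicalSpace.isTopologicalBasis_of_subbasis hXsc.symm).exists_subset_of_mem_open
            (Metric.mem_ball_self hm) Metric.isOpen_ball
        have hch : ∀ u ∈ T, ∃ a b : X, u = LX.Iplus a ∩ LX.Iminus b := fun u hu => hTS hu
        choose! va vb hvab using hch
        have hxu : ∀ u ∈ T, LX.chron (va u) x ∧ LX.chron x (vb u) := by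
          intro u hu
          have hx' : x ∈ u := Set.mem_sInter.mp hxv u hu
          rw [hvab u hu] at hx'
          exact hx'
        have hGo : IsOpen (⋂ u ∈ T, LX.Iplus (va u)) :=
          hTfin.isOpen_biInter fun u _ => LX.isOpen_Iplus _
        have hHo : IsOpen (⋂ u ∈ T, LX.Iminus (vb u)) :=
          hTfin.isOpen_biInter fun u _ => LX.isOpen_Iminus _
        have hxG : x ∈ ⋂ u ∈ T, LX.Iplus (va u) :=
          Set.mem_iInter₂.mpr fun u hu => (hxu u hu).1
        have hxH : x ∈ ⋂ u ∈ T, LX.Iminus (vb u) :=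
          Set.mem_iInter₂.mpr fun u hu => (hxu u hu).2
        -- pick `a'` on `γ` close to the endpoint `f x`
        have hγcw : ContinuousWithinAt γ (Set.Icc A₁ B₁) B₁ :=
          hLip₁.continuousOn.continuousWithinAt (Set.right_mem_Icc.mpr hAB₁.le)
        have hgγcw : ContinuousWithinAt (fun s => e.symm (γ s)) (Set.Icc A₁ B₁) B₁ :=
          hgc.continuousAt.comp_continuousWithinAt hγcw
        have m1 : γ ⁻¹' Metric.ball (f x) r ∈ 𝓝[Set.Icc A₁ B₁] B₁ :=
          hγcw.preimage_mem_nhdsWithin (by rw [hγB]; exact Metric.ball_mem_nhds _ hr)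
        have m2 : (fun s => e.symm (γ s)) ⁻¹' (⋂ u ∈ T, LX.Iplus (va u))
            ∈ 𝓝[Set.Icc A₁ B₁] B₁ := by
          apply hgγcw.preimage_mem_nhdsWithin
          have : e.symm (γ B₁) = x := by rw [hγB, hgf]
          rw [this]
          exact hGo.mem_nhds hxG
        have hne₁ : (𝓝[Set.Ico A₁ B₁] B₁).NeBot := by
          rw [← mem_closure_iff_nhdsWithin_neBot, closure_Ico hAB₁.ne]
          exact Set.right_mem_Icc.mpr hAB₁.le
        obtain ⟨s₁, ⟨hs₁ball, hs₁G⟩, hs₁Ico⟩ :=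
          Filter.nonempty_of_mem (Filter.inter_mem
            (Filter.inter_mem (nhdsWithin_mono _ Set.Ico_subset_Icc_self m1)
              (nhdsWithin_mono _ Set.Ico_subset_Icc_self m2)) self_mem_nhdsWithin)
        have ha'y : LY.chron (γ s₁) (f x) := by
          have := hγch (Set.Ico_subset_Icc_self hs₁Ico) (Set.right_mem_Icc.mpr hAB₁.le) hs₁Ico.2
          rwa [hγB] at this
        -- pick `b'` on `δ` close to the endpoint `f x`
        have hδcw : ContinuousWithinAt δ (Set.Icc A₂ B₂) A₂ :=
          hLip₂.continuousOn.continuousWithinAt (Set.left_mem_Icc.mpr hAB₂.le)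
        have hgδcw : ContinuousWithinAt (fun s => e.symm (δ s)) (Set.Icc A₂ B₂) A₂ :=
          hgc.continuousAt.comp_continuousWithinAt hδcw
        have m3 : (fun s => e.symm (δ s)) ⁻¹' (⋂ u ∈ T, LX.Iminus (vb u))
            ∈ 𝓝[Set.Icc A₂ B₂] A₂ := by
          apply hgδcw.preimage_mem_nhdsWithin
          have : e.symm (δ A₂) = x := by rw [hδA, hgf]
          rw [this]
          exact hHo.mem_nhds hxH
        have hne₂ : (𝓝[Set.Ioc A₂ B₂] A₂).NeBot := by
          rw [← mem_closure_iff_nhdsWithin_neBot, closure_Ioc hAB₂.ne]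
          exact Set.left_mem_Icc.mpr hAB₂.le
        obtain ⟨t₁, ht₁H, ht₁Ioc⟩ :=
          Filter.nonempty_of_mem (Filter.inter_mem
            (nhdsWithin_mono _ Set.Ioc_subset_Icc_self m3) self_mem_nhdsWithin)
        have hyb' : LY.chron (f x) (δ t₁) := by
          have := hδch (Set.left_mem_Icc.mpr hAB₂.le) (Set.Ioc_subset_Icc_self ht₁Ioc) ht₁Ioc.1
          rwa [hδA] at this
        -- the diamond in `X` with vertices `e.symm (γ s₁)` and `e.symm (δ t₁)`
        have hαx : LX.chron (e.symm (γ s₁)) x := by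
          rw [hchron, hfg]
          exact ha'y
        have hxβ : LX.chron x (e.symm (δ t₁)) := by
          rw [hchron, hfg]
          exact hyb'
        obtain ⟨x', hx'W, hx'far⟩ := hcon (LX.Iplus (e.symm (γ s₁)) ∩ LX.Iminus (e.symm (δ t₁)))
          ((LX.isOpen_Iplus _).inter (LX.isOpen_Iminus _)) ⟨hαx, hxβ⟩
        have ha'fx' : LY.chron (γ s₁) (f x') := by
          have := hx'W.1
          rw [show (x' ∈ LX.Iplus (e.symm (γ s₁))) = LX.chron (e.symm (γ s₁)) x' from rfl,
            hchron, hfg] at this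
          exact this
        have hfx'b' : LY.chron (f x') (δ t₁) := by
          have := hx'W.2
          rw [show (x' ∈ LX.Iminus (e.symm (δ t₁))) = LX.chron x' (e.symm (δ t₁)) from rfl,
            hchron, hfg] at this
          exact this
        obtain ⟨σ, c₁, d₁, hσ, hσc, hσd⟩ := hY.1.2 (γ s₁) (f x') ha'fx'
        obtain ⟨hcd, ⟨K₃, hLip₃⟩, -, hσch⟩ := hσ
        have hdistcont : ContinuousOn (fun s => dist (σ s) (f x)) (Set.Icc c₁ d₁) :=
          continuous_dist.comp_continuousOn (hLip₃.continuousOn.prodMk continuousOn_const)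
        have h1 : dist (σ c₁) (f x) < r := by
          rw [hσc]
          exact Metric.mem_ball.mp hs₁ball
        have h2 : r < dist (σ d₁) (f x) := by
          rw [hσd]
          exact lt_of_lt_of_le hrε hx'far
        obtain ⟨s₂, hs₂Icc, hs₂r⟩ :=
          intermediate_value_Icc hcd.le hdistcont ⟨h1.le, h2.le⟩
        have hs₂c : c₁ < s₂ := by
          rcases lt_or_eq_of_le hs₂Icc.1 with h | h
          · exact h
          · exfalso; rw [← h] at hs₂r; simp only at hs₂r; linarith
        have hs₂d : s₂ < d₁ := by
          rcases lt_or_eq_of_le hs₂Icc.2 with h | h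
          · exact h
          · exfalso; rw [h] at hs₂r; simp only at hs₂r; linarith
        have ha'z : LY.chron (γ s₁) (σ s₂) := by
          have := hσch (Set.left_mem_Icc.mpr hcd.le) hs₂Icc hs₂c
          rwa [hσc] at this
        have hzb' : LY.chron (σ s₂) (δ t₁) := by
          refine LY.chron_trans ?_ hfx'b'
          have := hσch hs₂Icc (Set.right_mem_Icc.mpr hcd.le) hs₂d
          rwa [hσd] at this
        have hζ1 : LX.chron (e.symm (γ s₁)) (e.symm (σ s₂)) := by
          rw [hchron, hfg, hfg]
          exact ha'z
        have hζ2 : LX.chron (e.symm (σ s₂)) (e.symm (δ t₁)) := by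
          rw [hchron, hfg, hfg]
          exact hzb'
        have hζT : e.symm (σ s₂) ∈ ⋂₀ T := by
          rw [Set.mem_sInter]
          intro u hu
          rw [hvab u hu]
          constructor
          · exact LX.chron_trans (Set.mem_iInter₂.mp hs₁G u hu) hζ1
          · exact LX.chron_trans hζ2 (Set.mem_iInter₂.mp ht₁H u hu)
        exact ⟨σ s₂, hs₂r, Metric.mem_ball.mp (hvball hζT)⟩
      choose Z hZr hZd using key
      have hZK : ∀ m, Z m ∈ K := fun m => hrK (Metric.mem_closedBall.mpr (hZr m).le)
      obtain ⟨zs, hzsK, φ, hφ, hφt⟩ := hKc.tendsto_subseq hZK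
      have hgZ : Tendsto (fun m => e.symm (Z m)) atTop (𝓝 x) := by
        rw [tendsto_iff_dist_tendsto_zero]
        exact squeeze_zero (fun m => dist_nonneg) (fun m => (hZd m).le)
          tendsto_one_div_add_atTop_nhds_zero_nat
      have hgZφ : Tendsto (fun k => e.symm (Z (φ k))) atTop (𝓝 x) :=
        hgZ.comp hφ.tendsto_atTop
      have hgzs : Tendsto (fun k => e.symm (Z (φ k))) atTop (𝓝 (e.symm zs)) :=
        (hgc.tendsto zs).comp hφt
      have hxzs : e.symm zs = x := tendsto_nhds_unique hgzs hgZφ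
      have hzsy : zs = f x := by rw [← hfg zs, hxzs]
      have hdzs : dist zs (f x) = r := by
        have hdt : Tendsto (fun k => dist (Z (φ k)) (f x)) atTop (𝓝 (dist zs (f x))) :=
          hφt.dist tendsto_const_nhds
        have hconst : (fun k => dist (Z (φ k)) (f x)) = fun _ => r :=
          funext fun k => hZr _
        rw [hconst] at hdt
        exact (tendsto_nhds_unique tendsto_const_nhds hdt).symm
      rw [hzsy] at hdzs
      simp at hdzs
      linarith
    rw [Metric.continuousAt_iff]
    intro ε hε
    obtain ⟨U, hUo, hxU, hU⟩ := main ε hε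
    obtain ⟨d₀, hd₀, hballU⟩ := Metric.isOpen_iff.mp hUo x hxU
    exact ⟨d₀, hd₀, fun {a} ha => hU a (hballU ha)⟩
  refine ⟨⟨⟨e, hfc, hgc⟩, rfl⟩, ?_⟩
  -- strong causality of `Y`
  have himg : ∀ W : Set X,
      TopologicalSpace.GenerateOpen {s : Set X | ∃ a b, s = LX.Iplus a ∩ LX.Iminus b} W →
      TopologicalSpace.GenerateOpen {s : Set Y | ∃ a b, s = LY.Iplus a ∩ LY.Iminus b}
        (f '' W) := by
    intro W hW
    induction hW with
    | basic u hu =>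
      obtain ⟨a, b, rfl⟩ := hu
      apply TopologicalSpace.GenerateOpen.basic
      refine ⟨f a, f b, ?_⟩
      rw [Set.image_inter hinj]
      congr 1
      · ext w
        simp only [Set.mem_image, LorentzianPreLengthSpace.Iplus, Set.mem_setOf_eq]
        constructor
        · rintro ⟨v, hv, rfl⟩
          exact (hchron a v).mp hv
        · intro hw
          exact ⟨e.symm w, by rw [hchron, hfg]; exact hw, hfg w⟩
      · ext w
        simp only [Set.mem_image, LorentzianPreLengthSpace.Iminus, Set.mem_setOf_eq]
        constructor
        · rintro ⟨v, hv, rfl⟩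
          exact (hchron v b).mp hv
        · intro hw
          exact ⟨e.symm w, by rw [hchron, hfg]; exact hw, hfg w⟩
    | univ =>
      rw [Set.image_univ, hsurj.range_eq]
      exact TopologicalSpace.GenerateOpen.univ
    | inter u v _ _ ihu ihv =>
      rw [Set.image_inter hinj]
      exact TopologicalSpace.GenerateOpen.inter _ _ ihu ihv
    | sUnion C _ ih =>
      rw [Set.image_sUnion]
      exact TopologicalSpace.GenerateOpen.sUnion _ (by rintro t ⟨u, hu, rfl⟩; exact ih u hu)
  apply le_antisymm
  · -- Alexandrov ≤ metric : every metric open set is Alexandrov open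
    rw [TopologicalSpace.le_def]
    intro V hV
    have hpre : IsOpen (f ⁻¹' V) := hV.preimage hfc
    have hgen : IsOpen[LX.AlexandrovTopology] (f ⁻¹' V) := by
      rw [hXsc]; exact hpre
    have := himg _ hgen
    rwa [Set.image_preimage_eq V hsurj] at this
  · -- metric ≤ Alexandrov : diamonds are metric open
    apply le_generateFrom
    rintro s ⟨a, b, rfl⟩
    exact (LY.isOpen_Iplus a).inter (LY.isOpen_Iminus b)
end

section
/- Let (X, d, ≪, ≤, τ) and (Y, d̃, ≪̃, ≤̃, τ̃) be Lorentzian length spaces such that X is causally continuous and the metric space (Y, d̃) is locally compact, and let f : X → Y be a surjective distance homothetic map. Then Y is causally continuous. -/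
open scoped NNReal ENNReal
open Set Filter Topology

/-- causal continuity is transferred along surjective distance homothetic
maps onto Lorentzian length spaces with locally compact metric. -/
theorem distanceHomothetic_causallyContinuous {X Y : Type*}
    [MetricSpace X] [MetricSpace Y] [LocallyCompactSpace Y]
    (LX : LorentzianPreLengthSpace X) (LY : LorentzianPreLengthSpace Y)
    (hX : LX.IsLengthSpace) (hY : LY.IsLengthSpace) (hXcc : LX.CausallyContinuous)
    (f : X → Y) (hsurj : Function.Surjective f) (hhom : DistanceHomothetic LX LY f) :
    LY.CausallyContinuous := by
  obtain ⟨c, hc, hfc⟩ := hhom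
  have key : ∀ p q : X, LY.chron (f p) (f q) ↔ LX.chron p q := by
    intro p q
    rw [← LY.tau_pos_iff, ← LX.tau_pos_iff, hfc, ENNReal.mul_pos_iff]
    constructor
    · exact fun h => h.2
    · exact fun h => ⟨ENNReal.coe_pos.mpr hc, h⟩
  have hIp : ∀ p q : X, LY.Iplus (f p) ⊆ LY.Iplus (f q) → LX.Iplus p ⊆ LX.Iplus q := by
    intro p q h r hr
    exact (key q r).mp (h ((key p r).mpr hr))
  have hIm : ∀ p q : X, LY.Iminus (f p) ⊆ LY.Iminus (f q) → LX.Iminus p ⊆ LX.Iminus q := by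
    intro p q h r hr
    exact (key r q).mp (h ((key r p).mpr hr))
  have hIp' : ∀ p q : X, LX.Iplus p ⊆ LX.Iplus q → LY.Iplus (f p) ⊆ LY.Iplus (f q) := by
    intro p q h y hy
    obtain ⟨r, rfl⟩ := hsurj y
    exact (key q r).mpr (h ((key p r).mp hy))
  have hIm' : ∀ p q : X, LX.Iminus p ⊆ LX.Iminus q → LY.Iminus (f p) ⊆ LY.Iminus (f q) := by
    intro p q h y hy
    obtain ⟨r, rfl⟩ := hsurj y
    exact (key r q).mpr (h ((key r p).mp hy))
  obtain ⟨⟨hd1, hd2⟩, hr1, hr2⟩ := hXcc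
  refine ⟨⟨?_, ?_⟩, ?_, ?_⟩
  · intro y y' h
    obtain ⟨p, rfl⟩ := hsurj y; obtain ⟨q, rfl⟩ := hsurj y'
    have := hd1 p q (Set.Subset.antisymm (hIp p q h.le) (hIp q p h.ge))
    rw [this]
  · intro y y' h
    obtain ⟨p, rfl⟩ := hsurj y; obtain ⟨q, rfl⟩ := hsurj y'
    have := hd2 p q (Set.Subset.antisymm (hIm p q h.le) (hIm q p h.ge))
    rw [this]
  · intro y y' h
    obtain ⟨p, rfl⟩ := hsurj y; obtain ⟨q, rfl⟩ := hsurj y'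
    exact hIm' q p (hr1 p q (hIp p q h))
  · intro y y' h
    obtain ⟨p, rfl⟩ := hsurj y; obtain ⟨q, rfl⟩ := hsurj y'
    exact hIp' p q (hr2 p q (hIm q p h))
end

section
/- Let (X, d, ≪, ≤, τ) and (Y, d̃, ≪̃, ≤̃, τ̃) be Lorentzian length spaces such that X is strongly causal and (Y, d̃) is locally compact, and let f : X → Y be a surjective distance homothetic map that is locally causally Lipschitz. Then for every future directed causal curve γ : [a, b] → X the composition f ∘ γ : [a, b] → Y is a future directed causal curve in Y; consequently f(J⁺(x)) ⊆ J⁺(f(x)) and f(J⁻(x)) ⊆ J⁻(f(x)) for all x ∈ X. -/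
open scoped NNReal ENNReal
open Set Filter Topology

section
variable {X : Type*} [MetricSpace X] (L : LorentzianPreLengthSpace X)

/-- no chronological loops at a single point, from localizability -/
lemma notchron_self (hloc : L.Localizable) (z : X) : ¬ L.chron z z := by
  obtain ⟨Ω, -, hz, -, ω, -, hfin, htri, -, hpos, -, -⟩ := hloc z
  have h1 : ω z z + ω z z ≤ ω z z := htri z hz z hz z hz (L.causal_refl z) (L.causal_refl z)
  have h2 : ω z z + ω z z = ω z z + 0 := by
    rw [add_zero]
    exact le_antisymm h1 le_self_add
  have h3 : ω z z = 0 := ((ENNReal.add_right_inj (hfin z hz z hz)).mp h2)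
  intro hc
  exact absurd ((hpos z hz z hz).mpr hc) (by simp [h3])

lemma pushup1 {x y z : X} (hxy : L.chron x y) (hyz : L.causal y z) : L.chron x z := by
  have h1 : 0 < L.tau x y := L.tau_pos_iff.mpr hxy
  have h2 := L.tau_rev_triangle (L.chron_imp_causal hxy) hyz
  exact L.tau_pos_iff.mp (lt_of_lt_of_le (lt_of_lt_of_le h1 le_self_add) h2)

lemma pushup2 {x y z : X} (hxy : L.causal x y) (hyz : L.chron y z) : L.chron x z := by
  have h1 : 0 < L.tau y z := L.tau_pos_iff.mpr hyz
  have h2 := L.tau_rev_triangle hxy (L.chron_imp_causal hyz)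
  exact L.tau_pos_iff.mp (lt_of_lt_of_le (lt_of_lt_of_le h1 le_add_self) h2)

/-- points chronologically below x can be found arbitrarily close to x -/
lemma approach_below (hpc : L.CausallyPathConnected) {p x : X} (h : L.chron p x)
    {ε : ℝ} (hε : 0 < ε) : ∃ z : X, L.chron p z ∧ L.chron z x ∧ dist z x < ε := by
  obtain ⟨γ, a, b, ⟨hab, ⟨K, hK⟩, -, hchron⟩, ha, hb⟩ := hpc.2 p x h
  set δ : ℝ := min ((b - a) / 2) (ε / (2 * ((K : ℝ) + 1))) with hδ
  have hKpos : (0:ℝ) < (K : ℝ) + 1 := by positivity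
  have hδpos : 0 < δ := lt_min (by linarith) (by positivity)
  have hδlt : δ < b - a := lt_of_le_of_lt (min_le_left _ _) (by linarith)
  set r : ℝ := b - δ with hr
  have har : a < r := by simp only [hr]; linarith
  have hrb : r < b := by simp only [hr]; linarith
  have hrmem : r ∈ Icc a b := ⟨le_of_lt har, le_of_lt hrb⟩
  have hbmem : b ∈ Icc a b := ⟨le_of_lt hab, le_refl b⟩
  have hamem : a ∈ Icc a b := ⟨le_refl a, le_of_lt hab⟩
  refine ⟨γ r, ?_, ?_, ?_⟩
  · have := hchron hamem hrmem har; rwa [ha] at this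
  · have := hchron hrmem hbmem hrb; rwa [hb] at this
  · have hd : dist (γ r) (γ b) ≤ (K : ℝ) * dist r b :=
      (lipschitzOnWith_iff_dist_le_mul.mp hK) r hrmem b hbmem
    have hdr : dist r b = δ := by
      rw [Real.dist_eq]; simp only [hr]; rw [abs_of_nonpos (by linarith)]; ring
    rw [hdr] at hd
    rw [← hb]
    have hδle : δ ≤ ε / (2 * ((K : ℝ) + 1)) := min_le_right _ _
    have : (K : ℝ) * δ < ε := by
      have h1 : (K : ℝ) * δ ≤ (K : ℝ) * (ε / (2 * ((K : ℝ) + 1))) :=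
        mul_le_mul_of_nonneg_left hδle (K.coe_nonneg)
      have h2 : (K : ℝ) * (ε / (2 * ((K : ℝ) + 1))) < ε := by
        rw [mul_div_assoc'] 
        rw [div_lt_iff₀ (by positivity)]
        nlinarith [K.coe_nonneg]
      linarith
    linarith

lemma approach_above (hpc : L.CausallyPathConnected) {x q : X} (h : L.chron x q)
    {ε : ℝ} (hε : 0 < ε) : ∃ z : X, L.chron x z ∧ L.chron z q ∧ dist z x < ε := by
  obtain ⟨γ, a, b, ⟨hab, ⟨K, hK⟩, -, hchron⟩, ha, hb⟩ := hpc.2 x q h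
  set δ : ℝ := min ((b - a) / 2) (ε / (2 * ((K : ℝ) + 1))) with hδ
  have hKpos : (0:ℝ) < (K : ℝ) + 1 := by positivity
  have hδpos : 0 < δ := lt_min (by linarith) (by positivity)
  have hδlt : δ < b - a := lt_of_le_of_lt (min_le_left _ _) (by linarith)
  set r : ℝ := a + δ with hr
  have har : a < r := by simp only [hr]; linarith
  have hrb : r < b := by simp only [hr]; linarith
  have hrmem : r ∈ Icc a b := ⟨le_of_lt har, le_of_lt hrb⟩
  have hbmem : b ∈ Icc a b := ⟨le_of_lt hab, le_refl b⟩
  have hamem : a ∈ Icc a b := ⟨le_refl a, le_of_lt hab⟩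
  refine ⟨γ r, ?_, ?_, ?_⟩
  · have := hchron hamem hrmem har; rwa [ha] at this
  · have := hchron hrmem hbmem hrb; rwa [hb] at this
  · have hd : dist (γ r) (γ a) ≤ (K : ℝ) * dist r a :=
      (lipschitzOnWith_iff_dist_le_mul.mp hK) r hrmem a hamem
    have hdr : dist r a = δ := by
      rw [Real.dist_eq]; simp only [hr]; rw [abs_of_nonneg (by linarith)]; ring
    rw [hdr] at hd
    rw [← ha]
    have hδle : δ ≤ ε / (2 * ((K : ℝ) + 1)) := min_le_right _ _
    have : (K : ℝ) * δ < ε := by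
      have h1 : (K : ℝ) * δ ≤ (K : ℝ) * (ε / (2 * ((K : ℝ) + 1))) :=
        mul_le_mul_of_nonneg_left hδle (K.coe_nonneg)
      have h2 : (K : ℝ) * (ε / (2 * ((K : ℝ) + 1))) < ε := by
        rw [mul_div_assoc']
        rw [div_lt_iff₀ (by positivity)]
        nlinarith [K.coe_nonneg]
      linarith
    linarith

lemma diamond_open (hXsc : L.StronglyCausal) (p q : X) :
    IsOpen (L.Iplus p ∩ L.Iminus q) := by
  have h : IsOpen[L.AlexandrovTopology] (L.Iplus p ∩ L.Iminus q) :=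
    TopologicalSpace.GenerateOpen.basic _ ⟨p, q, rfl⟩
  rwa [hXsc] at h

lemma same_profile_eq (hXsc : L.StronglyCausal) {x y : X}
    (h1 : ∀ r, L.chron r x ↔ L.chron r y) (h2 : ∀ r, L.chron x r ↔ L.chron y r) :
    x = y := by
  by_contra hne
  have hd : 0 < dist x y := dist_pos.mpr hne
  set V : Set X := Metric.ball x (dist x y) with hV
  have hxV : x ∈ V := Metric.mem_ball_self hd
  have hyV : y ∉ V := by
    simp only [hV, Metric.mem_ball]
    rw [dist_comm]
    exact lt_irrefl _
  have hVopen : IsOpen[L.AlexandrovTopology] V := by rw [hXsc]; exact Metric.isOpen_ball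
  have key : ∀ W : Set X, TopologicalSpace.GenerateOpen
      {s : Set X | ∃ p q : X, s = L.Iplus p ∩ L.Iminus q} W → (x ∈ W → y ∈ W) := by
    intro W hW
    induction hW with
    | basic s hs =>
        obtain ⟨p, q, rfl⟩ := hs
        rintro ⟨hp, hq⟩
        exact ⟨(h1 p).mp hp, (h2 q).mp hq⟩
    | univ => exact fun _ => trivial
    | inter s t _ _ ihs iht => exact fun hx => ⟨ihs hx.1, iht hx.2⟩
    | sUnion S _ ih => rintro ⟨s, hs, hxs⟩; exact ⟨s, hs, ih s hs hxs⟩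
  exact hyV (key V hVopen hxV)

/-- Strong causality gives arbitrarily small diamonds around every point. -/
lemma small_diamond (hX : L.IsLengthSpace) (hXsc : L.StronglyCausal) {x w : X}
    (hw : w ≠ x) {ε : ℝ} (hε : 0 < ε) :
    ∃ p q : X, L.chron p x ∧ L.chron x q ∧ dist p x < ε ∧ dist q x < ε ∧
      ∀ z, L.chron p z → L.chron z q → dist z x < ε := by
  set S : Set (Set X) := {s : Set X | ∃ p q : X, s = L.Iplus p ∩ L.Iminus q} with hS
  have hgen : (inferInstance : TopologicalSpace X) = TopologicalSpace.generateFrom S :=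
    hXsc.symm
  have hbasis := TopologicalSpace.isTopologicalBasis_of_subbasis hgen
  set r₀ : ℝ := min ε (dist x w) with hr₀
  have hr₀pos : 0 < r₀ := lt_min hε (dist_pos.mpr (Ne.symm hw))
  obtain ⟨B, hB, hxB, hBsub⟩ := hbasis.exists_subset_of_mem_open
    (Metric.mem_ball_self hr₀pos) Metric.isOpen_ball
  obtain ⟨F, ⟨hFfin, hFsub⟩, rfl⟩ := hB
  by_cases hFempty : F = ∅
  · exfalso
    rw [hFempty] at hBsub
    simp only [sInter_empty] at hBsub
    have : w ∈ Metric.ball x r₀ := hBsub (mem_univ w)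
    rw [Metric.mem_ball] at this
    have : dist w x < dist x w := lt_of_lt_of_le this (min_le_right _ _)
    rw [dist_comm] at this
    exact lt_irrefl _ this
  · obtain ⟨D₁, hD₁F⟩ := nonempty_iff_ne_empty.mpr hFempty
    obtain ⟨p₁, q₁, hD₁⟩ := hFsub hD₁F
    have hxD₁ : x ∈ D₁ := hxB D₁ hD₁F
    rw [hD₁] at hxD₁
    obtain ⟨hp₁x, hxq₁⟩ := hxD₁
    have hFopen : IsOpen (⋂₀ F) := by
      apply Set.Finite.isOpen_sInter hFfin
      intro s hs
      obtain ⟨p, q, rfl⟩ := hFsub hs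
      exact diamond_open L hXsc p q
    obtain ⟨ε₁, hε₁pos, hball₁⟩ := Metric.isOpen_iff.mp hFopen x hxB
    obtain ⟨p, -, hpx, hpd⟩ := approach_below L hX.1 hp₁x hε₁pos
    obtain ⟨q, hxq, -, hqd⟩ := approach_above L hX.1 hxq₁ hε₁pos
    have hpF : p ∈ ⋂₀ F := hball₁ (by rwa [Metric.mem_ball])
    have hqF : q ∈ ⋂₀ F := hball₁ (by rwa [Metric.mem_ball])
    have hsub : ∀ z, L.chron p z → L.chron z q → z ∈ ⋂₀ F := by
      intro z hpz hzq s hs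
      obtain ⟨ps, qs, rfl⟩ := hFsub hs
      obtain ⟨hps, hpq⟩ := hpF _ hs
      obtain ⟨hqs, hqq⟩ := hqF _ hs
      exact ⟨L.chron_trans hps hpz, L.chron_trans hzq hqq⟩
    have hballs : ∀ z, z ∈ ⋂₀ F → dist z x < ε := by
      intro z hz
      have := hBsub hz
      rw [Metric.mem_ball] at this
      exact lt_of_lt_of_le this (min_le_left _ _)
    exact ⟨p, q, hpx, hxq, hballs p hpF, hballs q hqF,
      fun z hpz hzq => hballs z (hsub z hpz hzq)⟩

lemma lipsOn_weaken {E : Type*} [MetricSpace E] {g : ℝ → E} {s : Set ℝ} {K K' : ℝ≥0}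
    (h : LipschitzOnWith K g s) (hle : K ≤ K') : LipschitzOnWith K' g s :=
  fun x hx y hy => le_trans (h hx hy)
    (mul_le_mul_left (ENNReal.coe_le_coe.mpr hle) _)

lemma lip_glue {E : Type*} [MetricSpace E] {g : ℝ → E} {a c b : ℝ} {K : ℝ≥0}
    (hac : a ≤ c) (hcb : c ≤ b) (h1 : LipschitzOnWith K g (Icc a c))
    (h2 : LipschitzOnWith K g (Icc c b)) : LipschitzOnWith K g (Icc a b) := by
  rw [lipschitzOnWith_iff_dist_le_mul] at h1 h2 ⊢
  have key : ∀ x ∈ Icc a b, ∀ y ∈ Icc a b, x ≤ y → dist (g x) (g y) ≤ (K : ℝ) * dist x y := by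
    intro x hx y hy hxy
    rcases le_or_gt y c with hyc | hcy
    · exact h1 x ⟨hx.1, le_trans hxy hyc⟩ y ⟨hy.1, hyc⟩
    · rcases le_or_gt c x with hcx | hxc
      · exact h2 x ⟨hcx, hx.2⟩ y ⟨le_trans hcx hxy, hy.2⟩
      · have e1 : dist (g x) (g c) ≤ (K : ℝ) * dist x c :=
          h1 x ⟨hx.1, le_of_lt hxc⟩ c ⟨hac, le_refl c⟩
        have e2 : dist (g c) (g y) ≤ (K : ℝ) * dist c y :=
          h2 c ⟨le_refl c, hcb⟩ y ⟨le_of_lt hcy, hy.2⟩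
        have hd : dist x c + dist c y = dist x y := by
          rw [Real.dist_eq, Real.dist_eq, Real.dist_eq,
            abs_of_nonpos (by linarith), abs_of_nonpos (by linarith),
            abs_of_nonpos (by linarith)]
          ring
        calc dist (g x) (g y) ≤ dist (g x) (g c) + dist (g c) (g y) := dist_triangle _ _ _
          _ ≤ (K : ℝ) * dist x c + (K : ℝ) * dist c y := add_le_add e1 e2
          _ = (K : ℝ) * dist x y := by rw [← hd]; ring
  intro x hx y hy
  rcases le_total x y with hxy | hyx
  · exact key x hx y hy hxy
  · rw [dist_comm (g x), dist_comm x]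
    exact key y hy x hx hyx

lemma lipschitzOnWith_of_locally {E : Type*} [MetricSpace E] {g : ℝ → E} {a b : ℝ}
    (hab : a ≤ b)
    (h : ∀ u ∈ Icc a b, ∃ δ > 0, ∃ M : ℝ, 0 ≤ M ∧ ∀ s ∈ Icc a b, ∀ t ∈ Icc a b,
      |s - u| < δ → |t - u| < δ → dist (g s) (g t) ≤ M * dist s t) :
    ∃ K : ℝ≥0, LipschitzOnWith K g (Icc a b) := by
  set S : Set ℝ := {c | c ∈ Icc a b ∧ ∃ K : ℝ≥0, LipschitzOnWith K g (Icc a c)} with hSdef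
  have haS : a ∈ S := by
    refine ⟨⟨le_refl a, hab⟩, 0, ?_⟩
    rw [lipschitzOnWith_iff_dist_le_mul]
    intro x hx y hy
    rw [Icc_self, mem_singleton_iff] at hx hy
    rw [hx, hy]
    simp
  have hSne : S.Nonempty := ⟨a, haS⟩
  have hSbdd : BddAbove S := ⟨b, fun z hz => hz.1.2⟩
  set T : ℝ := sSup S with hT
  have haT : a ≤ T := le_csSup hSbdd haS
  have hTb : T ≤ b := csSup_le hSne (fun z hz => hz.1.2)
  obtain ⟨δ, hδpos, M, hM, hloc⟩ := h T ⟨haT, hTb⟩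
  obtain ⟨c, hcS, hcT⟩ := exists_lt_of_lt_csSup hSne (by linarith : T - δ < T)
  have hcleT : c ≤ T := le_csSup hSbdd hcS
  obtain ⟨⟨hac, hcb⟩, Kc, hKc⟩ := hcS
  set t' : ℝ := min b (T + δ / 2) with ht'
  have hTt' : T ≤ t' := le_min hTb (by linarith)
  have ht'b : t' ≤ b := min_le_left _ _
  have hlocal : LipschitzOnWith M.toNNReal g (Icc c t') := by
    rw [lipschitzOnWith_iff_dist_le_mul]
    intro x hx y hy
    have hxab : x ∈ Icc a b := ⟨le_trans hac hx.1, le_trans hx.2 ht'b⟩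
    have hyab : y ∈ Icc a b := ⟨le_trans hac hy.1, le_trans hy.2 ht'b⟩
    have hxT : |x - T| < δ := by
      rw [abs_lt]
      constructor
      · have := hx.1; linarith
      · have := le_trans hx.2 (min_le_right _ _); linarith
    have hyT : |y - T| < δ := by
      rw [abs_lt]
      constructor
      · have := hy.1; linarith
      · have := le_trans hy.2 (min_le_right _ _); linarith
    have := hloc x hxab y hyab hxT hyT
    rwa [Real.coe_toNNReal M hM]
  set K' : ℝ≥0 := max Kc M.toNNReal with hK'
  have hglue : LipschitzOnWith K' g (Icc a t') :=
    lip_glue hac (le_trans hcleT hTt')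
      (lipsOn_weaken hKc (le_max_left _ _))
      (lipsOn_weaken hlocal (le_max_right _ _))
  have ht'S : t' ∈ S := ⟨⟨le_trans hac (le_trans hcleT hTt'), ht'b⟩, K', hglue⟩
  have ht'leT : t' ≤ T := le_csSup hSbdd ht'S
  have hTeqb : T = b := by
    by_contra hne
    have hTltb : T < b := lt_of_le_of_ne hTb hne
    have : T < t' := lt_min hTltb (by linarith)
    linarith
  have : t' = b := le_antisymm ht'b (le_min (le_refl b) (by linarith))
  rw [this] at hglue
  exact ⟨K', hglue⟩

lemma localToGlobalRel {α : Type*} (R : α → α → Prop) (g : ℝ → α) (a b : ℝ)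
    (htrans : ∀ {x y z}, R x y → R y z → R x z) (hrefl : ∀ x, R x x)
    (hloc : ∀ u ∈ Icc a b, ∃ δ > 0, ∀ s ∈ Icc a b, ∀ t ∈ Icc a b,
      |s - u| < δ → |t - u| < δ → s < t → R (g s) (g t)) :
    ∀ s ∈ Icc a b, ∀ t ∈ Icc a b, s < t → R (g s) (g t) := by
  intro s hs t ht hst
  set S : Set ℝ := {r | r ∈ Icc s t ∧ R (g s) (g r)} with hSdef
  have hsS : s ∈ S := ⟨⟨le_refl s, le_of_lt hst⟩, hrefl _⟩
  have hSne : S.Nonempty := ⟨s, hsS⟩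
  have hSbdd : BddAbove S := ⟨t, fun z hz => hz.1.2⟩
  set T : ℝ := sSup S with hT
  have hsT : s ≤ T := le_csSup hSbdd hsS
  have hTt : T ≤ t := csSup_le hSne (fun z hz => hz.1.2)
  have hTab : T ∈ Icc a b := ⟨le_trans hs.1 hsT, le_trans hTt ht.2⟩
  obtain ⟨δ, hδpos, hloc'⟩ := hloc T hTab
  obtain ⟨c, hcS, hcT⟩ := exists_lt_of_lt_csSup hSne (by linarith : T - δ < T)
  have hcleT : c ≤ T := le_csSup hSbdd hcS
  have hcab : c ∈ Icc a b := ⟨le_trans hs.1 hcS.1.1, le_trans hcS.1.2 ht.2⟩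
  have hRsT : R (g s) (g T) := by
    rcases eq_or_lt_of_le hcleT with heq | hlt
    · rw [← heq]; exact hcS.2
    · exact htrans hcS.2 (hloc' c hcab T hTab
        (by rw [abs_lt]; constructor <;> linarith)
        (by simp [abs_lt]; exact hδpos) hlt)
  have hTeqt : T = t := by
    by_contra hne
    have hTltt : T < t := lt_of_le_of_ne hTt hne
    set t'' : ℝ := min t (T + δ / 2) with ht''
    have hTt'' : T < t'' := lt_min hTltt (by linarith)
    have ht''t : t'' ≤ t := min_le_left _ _
    have ht''ab : t'' ∈ Icc a b := ⟨le_trans hs.1 (le_trans hsT (le_of_lt hTt'')), le_trans ht''t ht.2⟩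
    have hRt'' : R (g T) (g t'') := hloc' T hTab t'' ht''ab
      (by simp [abs_lt]; exact hδpos)
      (by rw [abs_lt]; constructor
          · linarith
          · have := min_le_right t (T + δ / 2); linarith) hTt''
    have : t'' ∈ S := ⟨⟨le_trans hsT (le_of_lt hTt''), ht''t⟩, htrans hRsT hRt''⟩
    have := le_csSup hSbdd this
    linarith
  rw [← hTeqt]
  exact hRsT

variable {Y : Type*} [MetricSpace Y] (LY : LorentzianPreLengthSpace Y)

lemma chron_pres {f : X → Y} (hhom : DistanceHomothetic L LY f) {x y : X}
    (h : L.chron x y) : LY.chron (f x) (f y) := by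
  obtain ⟨c, hc, hτ⟩ := hhom
  refine LY.tau_pos_iff.mp ?_
  rw [hτ]
  exact ENNReal.mul_pos (ENNReal.coe_ne_zero.mpr hc.ne') (L.tau_pos_iff.mpr h).ne'

lemma homothetic_inj (hXsc : L.StronglyCausal) {f : X → Y}
    (hhom : DistanceHomothetic L LY f) : Function.Injective f := by
  obtain ⟨c, hc, hτ⟩ := hhom
  intro x y hxy
  have hc0 : (c : ℝ≥0∞) ≠ 0 := ENNReal.coe_ne_zero.mpr hc.ne'
  have hct : (c : ℝ≥0∞) ≠ ⊤ := ENNReal.coe_ne_top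
  have h1 : ∀ r, L.tau r x = L.tau r y := by
    intro r
    have : (c : ℝ≥0∞) * L.tau r x = (c : ℝ≥0∞) * L.tau r y := by
      rw [← hτ, ← hτ, hxy]
    exact (ENNReal.mul_right_inj hc0 hct).mp this
  have h2 : ∀ r, L.tau x r = L.tau y r := by
    intro r
    have : (c : ℝ≥0∞) * L.tau x r = (c : ℝ≥0∞) * L.tau y r := by
      rw [← hτ, ← hτ, hxy]
    exact (ENNReal.mul_right_inj hc0 hct).mp this
  exact same_profile_eq L hXsc
    (fun r => by rw [← L.tau_pos_iff, ← L.tau_pos_iff, h1 r])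
    (fun r => by rw [← L.tau_pos_iff, ← L.tau_pos_iff, h2 r])

lemma local_causal (hX : L.IsLengthSpace) (hY : LY.IsLengthSpace)
    (hXsc : L.StronglyCausal) {f : X → Y} (hhom : DistanceHomothetic L LY f)
    (hlip : LocallyCausallyLipschitz L f) {γ : ℝ → X} {a b : ℝ}
    (hγ : L.IsFutureCausalCurve γ a b) :
    ∀ u ∈ Icc a b, ∃ δ > 0, ∀ s ∈ Icc a b, ∀ t ∈ Icc a b,
      |s - u| < δ → |t - u| < δ → s < t → LY.causal (f (γ s)) (f (γ t)) := by
  obtain ⟨hab, ⟨Kγ, hKγ⟩, ⟨x₁, hx₁, x₂, hx₂, hx12⟩, hcausal⟩ := hγ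
  intro u hu
  have hwex : ∃ w : X, w ≠ γ u := by
    rcases eq_or_ne (γ x₁) (γ u) with h | h
    · exact ⟨γ x₂, fun e => hx12 (by rw [h, e])⟩
    · exact ⟨γ x₁, h⟩
  obtain ⟨w, hwne⟩ := hwex
  obtain ⟨W, hWopen, hWmem, M, hMpos, hWlip⟩ := hlip (γ u)
  obtain ⟨U, hUopen, hUmem, hUcc⟩ := hY.2.1 (f (γ u))
  obtain ⟨εW, hεWpos, hWball⟩ := Metric.isOpen_iff.mp hWopen (γ u) hWmem
  obtain ⟨εU, hεUpos, hUball⟩ := Metric.isOpen_iff.mp hUopen (f (γ u)) hUmem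
  set ε' : ℝ := min εW (εU / (4 * M)) with hε'
  have hε'pos : 0 < ε' := lt_min hεWpos (by positivity)
  have hε'W : ε' ≤ εW := min_le_left _ _
  have hε'U : ε' ≤ εU / (4 * M) := min_le_right _ _
  have hMε' : M * ε' ≤ εU / 4 := by
    have h1 : M * ε' ≤ M * (εU / (4 * M)) := mul_le_mul_of_nonneg_left hε'U hMpos.le
    have h2 : M * (εU / (4 * M)) = εU / 4 := by field_simp
    linarith
  obtain ⟨p, q, hpu, huq, hpd, hqd, hdia⟩ := small_diamond L hX hXsc hwne hε'pos
  have hWball' : ∀ z : X, dist z (γ u) < ε' → z ∈ W := by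
    intro z hz
    exact hWball (by rw [Metric.mem_ball]; exact lt_of_lt_of_le hz hε'W)
  have hpW : p ∈ W := hWball' p hpd
  have hfball : ∀ z, L.chron p z → L.chron z q → dist (f z) (f (γ u)) < εU := by
    intro z hpz hzq
    have hzd := hdia z hpz hzq
    have hzW : z ∈ W := hWball' z hzd
    have e1 : dist (f p) (f z) ≤ M * dist p z := hWlip p hpW z hzW (L.chron_imp_causal hpz)
    have e2 : dist (f p) (f (γ u)) ≤ M * dist p (γ u) :=
      hWlip p hpW (γ u) (hWball' (γ u) (by simpa using hε'pos)) (L.chron_imp_causal hpu)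
    have e3 : dist p z ≤ dist z (γ u) + dist p (γ u) := by
      rw [dist_comm p z, dist_comm p (γ u)]
      exact dist_triangle z (γ u) p
    have e4 : dist (f z) (f (γ u)) ≤ dist (f p) (f z) + dist (f p) (f (γ u)) := by
      rw [dist_comm (f p) (f z)]
      exact dist_triangle (f z) (f p) (f (γ u))
    have e5 : dist (f z) (f (γ u)) ≤ M * (dist z (γ u) + dist p (γ u)) + M * dist p (γ u) := by
      calc dist (f z) (f (γ u)) ≤ dist (f p) (f z) + dist (f p) (f (γ u)) := e4
        _ ≤ M * dist p z + M * dist p (γ u) := add_le_add e1 e2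
        _ ≤ M * (dist z (γ u) + dist p (γ u)) + M * dist p (γ u) := by
            have := mul_le_mul_of_nonneg_left e3 hMpos.le
            linarith
    have e6 : M * dist z (γ u) ≤ εU / 4 := by
      have := mul_le_mul_of_nonneg_left hzd.le hMpos.le
      linarith
    have e7 : M * dist p (γ u) ≤ εU / 4 := by
      have := mul_le_mul_of_nonneg_left hpd.le hMpos.le
      linarith
    have : M * (dist z (γ u) + dist p (γ u)) + M * dist p (γ u) ≤ 3 * (εU / 4) := by
      rw [mul_add]
      linarith
    linarith
  -- continuity of γ into the diamond
  set D : Set X := L.Iplus p ∩ L.Iminus q with hD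
  have hDopen : IsOpen D := diamond_open L hXsc p q
  have hγuD : γ u ∈ D := ⟨hpu, huq⟩
  have hγcont : ContinuousOn γ (Icc a b) := hKγ.continuousOn
  have hpre : γ ⁻¹' D ∈ 𝓝[Icc a b] u := (hγcont u hu) (hDopen.mem_nhds hγuD)
  obtain ⟨δ, hδpos, hδsub⟩ := Metric.mem_nhdsWithin_iff.mp hpre
  refine ⟨δ, hδpos, ?_⟩
  intro s hs t ht hsu htu hst
  have hγsD : γ s ∈ D := hδsub ⟨by rw [Metric.mem_ball, Real.dist_eq]; exact hsu, hs⟩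
  have hγtD : γ t ∈ D := hδsub ⟨by rw [Metric.mem_ball, Real.dist_eq]; exact htu, ht⟩
  obtain ⟨hps, hsq⟩ := hγsD
  obtain ⟨hpt, htq⟩ := hγtD
  have hstC : L.causal (γ s) (γ t) := hcausal hs ht hst
  have hcp : ∀ {x y : X}, L.chron x y → LY.chron (f x) (f y) := fun h => chron_pres L LY hhom h
  have hseq : ∀ n : ℕ, ∃ z, L.chron p z ∧ L.chron z (γ s) ∧ dist z (γ s) < 1 / (n + 1) := by
    intro n
    exact approach_below L hX.1 hps (by positivity)
  choose xs hxs1 hxs2 hxs3 using hseq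
  have hxsW : ∀ n, L.chron (xs n) q := fun n => L.chron_trans (hxs2 n) hsq
  have hCI : ∀ n, LY.CausalInside U (f (xs n)) (f (γ t)) := by
    intro n
    have hxt : L.chron (xs n) (γ t) := pushup1 L (hxs2 n) hstC
    obtain ⟨lam, an, bn, hlam, hlama, hlamb⟩ := hX.1.2 (xs n) (γ t) hxt
    obtain ⟨habn, ⟨Kn, hKn⟩, -, hchr⟩ := hlam
    have htrap : ∀ r ∈ Icc an bn, L.chron p (lam r) ∧ L.chron (lam r) q := by
      intro r hr
      constructor
      · rcases eq_or_lt_of_le hr.1 with he | hl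
        · rw [← he, hlama]; exact hxs1 n
        · refine L.chron_trans (hxs1 n) ?_
          have := hchr ⟨le_refl an, le_of_lt habn⟩ hr hl
          rwa [hlama] at this
      · rcases eq_or_lt_of_le hr.2 with he | hl
        · rw [he, hlamb]; exact htq
        · refine L.chron_trans ?_ htq
          have := hchr hr ⟨le_of_lt habn, le_refl bn⟩ hl
          rwa [hlamb] at this
    have hmemW : ∀ r ∈ Icc an bn, lam r ∈ W := by
      intro r hr
      exact hWball' _ (hdia _ (htrap r hr).1 (htrap r hr).2)
    have hmemU : ∀ r ∈ Icc an bn, f (lam r) ∈ U := by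
      intro r hr
      exact hUball (by rw [Metric.mem_ball]; exact hfball _ (htrap r hr).1 (htrap r hr).2)
    have hlipkey : ∀ r ∈ Icc an bn, ∀ r' ∈ Icc an bn, r ≤ r' →
        dist (f (lam r)) (f (lam r')) ≤ (M * Kn) * dist r r' := by
      intro r hr r' hr' hle
      rcases eq_or_lt_of_le hle with he | hlt
      · rw [he]; simp [dist_nonneg]
      · have h1 : dist (f (lam r)) (f (lam r')) ≤ M * dist (lam r) (lam r') :=
          hWlip _ (hmemW r hr) _ (hmemW r' hr')
            (L.chron_imp_causal (hchr hr hr' hlt))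
        have h2 : dist (lam r) (lam r') ≤ (Kn : ℝ) * dist r r' :=
          (lipschitzOnWith_iff_dist_le_mul.mp hKn) r hr r' hr'
        calc dist (f (lam r)) (f (lam r')) ≤ M * dist (lam r) (lam r') := h1
          _ ≤ M * ((Kn : ℝ) * dist r r') := mul_le_mul_of_nonneg_left h2 hMpos.le
          _ = (M * Kn) * dist r r' := by ring
    refine ⟨f ∘ lam, an, bn, ⟨habn, ⟨M.toNNReal * Kn, ?_⟩, ?_, ?_⟩,
      by simp [Function.comp, hlama], by simp [Function.comp, hlamb], ?_⟩
    · rw [lipschitzOnWith_iff_dist_le_mul]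
      intro r hr r' hr'
      have hcoe : ((M.toNNReal * Kn : ℝ≥0) : ℝ) = M * Kn := by
        push_cast
        rw [Real.coe_toNNReal _ hMpos.le]
      rw [hcoe]
      simp only [Function.comp_apply]
      rcases le_total r r' with h | h
      · exact hlipkey r hr r' hr' h
      · rw [dist_comm (f (lam r)), dist_comm r]
        exact hlipkey r' hr' r hr h
    · refine ⟨an, ⟨le_refl an, habn.le⟩, bn, ⟨habn.le, le_refl bn⟩, ?_⟩
      simp only [Function.comp]
      rw [hlama, hlamb]
      intro heq
      have := hcp hxt
      rw [heq] at this
      exact notchron_self LY hY.2.2.1 _ this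
    · intro s' hs' t' ht' hlt
      exact LY.chron_imp_causal (hcp (hchr hs' ht' hlt))
    · rintro _ ⟨r, hr, rfl⟩
      exact hmemU r hr
  have hsW : γ s ∈ W := hWball' _ (hdia _ hps hsq)
  have hxsWm : ∀ n, xs n ∈ W := fun n => hWball' _ (hdia _ (hxs1 n) (hxsW n))
  have htend : Tendsto (fun n => f (xs n)) atTop (𝓝 (f (γ s))) := by
    rw [tendsto_iff_dist_tendsto_zero]
    have hbound : ∀ n : ℕ, dist (f (xs n)) (f (γ s)) ≤ M * (1 / (n + 1)) := by
      intro n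
      calc dist (f (xs n)) (f (γ s)) ≤ M * dist (xs n) (γ s) :=
            hWlip _ (hxsWm n) _ hsW (L.chron_imp_causal (hxs2 n))
        _ ≤ M * (1 / (n + 1)) := mul_le_mul_of_nonneg_left (hxs3 n).le hMpos.le
    have hlim : Tendsto (fun n : ℕ => M * (1 / ((n : ℝ) + 1))) atTop (𝓝 0) := by
      have := tendsto_one_div_add_atTop_nhds_zero_nat.const_mul M
      simpa using this
    exact squeeze_zero (fun n => dist_nonneg) hbound hlim
  have hfsU : f (γ s) ∈ U := hUball (by rw [Metric.mem_ball]; exact hfball _ hps hsq)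
  have hftU : f (γ t) ∈ U := hUball (by rw [Metric.mem_ball]; exact hfball _ hpt htq)
  obtain ⟨σ, cc, ee, hσ, hσc, hσe, -⟩ :=
    hUcc (f (γ s)) (f (γ t)) (fun n => f (xs n)) (fun _ => f (γ t)) hCI htend
      tendsto_const_nhds hfsU hftU
  have hce := hσ.1
  have := hσ.2.2.2 ⟨le_refl cc, hce.le⟩ ⟨hce.le, le_refl ee⟩ hce
  rwa [hσc, hσe] at this

lemma maps_causal_curve (hX : L.IsLengthSpace) (hY : LY.IsLengthSpace)
    (hXsc : L.StronglyCausal) {f : X → Y} (hhom : DistanceHomothetic L LY f)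
    (hlip : LocallyCausallyLipschitz L f) {γ : ℝ → X} {a b : ℝ}
    (hγ : L.IsFutureCausalCurve γ a b) : LY.IsFutureCausalCurve (f ∘ γ) a b := by
  obtain ⟨hab, ⟨Kγ, hKγ⟩, ⟨x₁, hx₁, x₂, hx₂, hx12⟩, hcausal⟩ := hγ
  have hγ' : L.IsFutureCausalCurve γ a b :=
    ⟨hab, ⟨Kγ, hKγ⟩, ⟨x₁, hx₁, x₂, hx₂, hx12⟩, hcausal⟩
  refine ⟨hab, ?_, ?_, ?_⟩
  · -- Lipschitz
    refine lipschitzOnWith_of_locally hab.le ?_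
    intro u hu
    obtain ⟨W, hWopen, hWmem, M, hMpos, hWlip⟩ := hlip (γ u)
    have hγcont : ContinuousOn γ (Icc a b) := hKγ.continuousOn
    have hpre : γ ⁻¹' W ∈ 𝓝[Icc a b] u := (hγcont u hu) (hWopen.mem_nhds hWmem)
    obtain ⟨δ, hδpos, hδsub⟩ := Metric.mem_nhdsWithin_iff.mp hpre
    refine ⟨δ, hδpos, M * Kγ, by positivity, ?_⟩
    intro s hs t ht hsu htu
    have hsW : γ s ∈ W := hδsub ⟨by rw [Metric.mem_ball, Real.dist_eq]; exact hsu, hs⟩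
    have htW : γ t ∈ W := hδsub ⟨by rw [Metric.mem_ball, Real.dist_eq]; exact htu, ht⟩
    have key : ∀ s' ∈ Icc a b, ∀ t' ∈ Icc a b, γ s' ∈ W → γ t' ∈ W → s' < t' →
        dist ((f ∘ γ) s') ((f ∘ γ) t') ≤ M * Kγ * dist s' t' := by
      intro s' hs' t' ht' hsW' htW' hlt
      simp only [Function.comp_apply]
      calc dist (f (γ s')) (f (γ t')) ≤ M * dist (γ s') (γ t') :=
            hWlip _ hsW' _ htW' (hcausal hs' ht' hlt)
        _ ≤ M * ((Kγ : ℝ) * dist s' t') :=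
            mul_le_mul_of_nonneg_left
              ((lipschitzOnWith_iff_dist_le_mul.mp hKγ) s' hs' t' ht') hMpos.le
        _ = M * Kγ * dist s' t' := by ring
    rcases lt_trichotomy s t with h | h | h
    · exact key s hs t ht hsW htW h
    · rw [h]; simp [dist_nonneg]
    · rw [dist_comm ((f ∘ γ) s), dist_comm s]
      exact key t ht s hs htW hsW h
  · -- non-constant
    refine ⟨x₁, hx₁, x₂, hx₂, ?_⟩
    simp only [Function.comp_apply]
    intro heq
    exact hx12 (homothetic_inj L LY hXsc hhom heq)
  · -- causal
    intro s hs t ht hst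
    exact localToGlobalRel LY.causal (f ∘ γ) a b
      (fun h1 h2 => LY.causal_trans h1 h2) LY.causal_refl
      (local_causal L LY hX hY hXsc hhom hlip hγ') s hs t ht hst
end

/-- a surjective, locally causally Lipschitz, distance homothetic map from a
strongly causal Lorentzian length space to a Lorentzian length space with locally compact
metric maps future directed causal curves to future directed causal curves; consequently
`f(J±(x)) ⊆ J±(f(x))`. -/
theorem distanceHomothetic_maps_causal_curves {X Y : Type*}
    [MetricSpace X] [MetricSpace Y] [LocallyCompactSpace Y]
    (LX : LorentzianPreLengthSpace X) (LY : LorentzianPreLengthSpace Y)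
    (hX : LX.IsLengthSpace) (hY : LY.IsLengthSpace) (hXsc : LX.StronglyCausal)
    (f : X → Y) (hsurj : Function.Surjective f) (hhom : DistanceHomothetic LX LY f)
    (hlip : LocallyCausallyLipschitz LX f) :
    (∀ (γ : ℝ → X) (a b : ℝ), LX.IsFutureCausalCurve γ a b →
        LY.IsFutureCausalCurve (f ∘ γ) a b) ∧
    (∀ x : X, f '' LX.Jplus x ⊆ LY.Jplus (f x)) ∧
    (∀ x : X, f '' LX.Jminus x ⊆ LY.Jminus (f x)) := by
  have part1 : ∀ (γ : ℝ → X) (a b : ℝ), LX.IsFutureCausalCurve γ a b →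
      LY.IsFutureCausalCurve (f ∘ γ) a b :=
    fun γ a b hγ => maps_causal_curve LX LY hX hY hXsc hhom hlip hγ
  refine ⟨part1, ?_, ?_⟩
  · intro x y hy
    obtain ⟨z, hz, rfl⟩ := hy
    rcases eq_or_ne x z with rfl | hne
    · exact LY.causal_refl _
    · obtain ⟨γ, a, b, hγ, ha, hb⟩ := hX.1.1 x z hz hne
      have hfγ := part1 γ a b hγ
      have hab := hfγ.1
      have hc := hfγ.2.2.2 (s := a) ⟨le_refl a, hab.le⟩ (t := b) ⟨hab.le, le_refl b⟩ hab
      simp only [Function.comp_apply] at hc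
      rw [ha, hb] at hc
      exact hc
  · intro x y hy
    obtain ⟨z, hz, rfl⟩ := hy
    rcases eq_or_ne z x with heq | hne
    · rw [heq]; exact LY.causal_refl _
    · obtain ⟨γ, a, b, hγ, ha, hb⟩ := hX.1.1 z x hz hne
      have hfγ := part1 γ a b hγ
      have hab := hfγ.1
      have hc := hfγ.2.2.2 (s := a) ⟨le_refl a, hab.le⟩ (t := b) ⟨hab.le, le_refl b⟩ hab
      simp only [Function.comp_apply] at hc
      rw [ha, hb] at hc
      exact hc
end

section
/- Let (X, d, ≪, ≤, τ) and (Y, d̃, ≪̃, ≤̃, τ̃) be Lorentzian length spaces with (X, d) and (Y, d̃) locally compact, and let f : X → Y be a surjective distance homothetic map that is locally causally Lipschitz. If X is stably causal (the relation K⁺ on X × X is antisymmetric), then Y is stably causal (the relation K⁺ on Y × Y is antisymmetric). -/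
open scoped NNReal ENNReal
open Set Filter Topology

section Aux

open LorentzianPreLengthSpace

variable {X : Type*} [MetricSpace X]

lemma LorentzianPreLengthSpace.causal_mem_Kplus (L : LorentzianPreLengthSpace X) {x y : X}
    (h : L.causal x y) : (x, y) ∈ L.Kplus :=
  Set.mem_sInter.2 fun _R hR => hR.2.2 h

lemma LorentzianPreLengthSpace.isClosed_Kplus (L : LorentzianPreLengthSpace X) :
    IsClosed L.Kplus :=
  isClosed_sInter fun _R hR => hR.1

lemma LorentzianPreLengthSpace.Kplus_trans (L : LorentzianPreLengthSpace X) {a b c : X}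
    (h1 : (a, b) ∈ L.Kplus) (h2 : (b, c) ∈ L.Kplus) : (a, c) ∈ L.Kplus :=
  Set.mem_sInter.2 fun R hR =>
    hR.2.1 a b c (Set.mem_sInter.1 h1 R hR) (Set.mem_sInter.1 h2 R hR)

lemma LorentzianPreLengthSpace.mem_Kplus_of_limit (L : LorentzianPreLengthSpace X)
    {x y : ℕ → X} {a b : X} (hx : Tendsto x atTop (𝓝 a)) (hy : Tendsto y atTop (𝓝 b))
    (h : ∀ᶠ n in atTop, L.causal (x n) (y n)) : (a, b) ∈ L.Kplus :=
  (L.isClosed_Kplus).mem_of_tendsto (hx.prodMk_nhds hy)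
    (h.mono fun _n hn => L.causal_mem_Kplus hn)

lemma LorentzianPreLengthSpace.isOpen_chron (L : LorentzianPreLengthSpace X) :
    IsOpen {pq : X × X | L.chron pq.1 pq.2} := by
  have h := (lowerSemicontinuous_iff_isOpen_preimage.mp L.tau_lsc) 0
  have heq : {pq : X × X | L.chron pq.1 pq.2}
      = (fun p : X × X => L.tau p.1 p.2) ⁻¹' Set.Ioi 0 := by
    ext pq
    simp only [Set.mem_setOf_eq, Set.mem_preimage, Set.mem_Ioi]
    exact L.tau_pos_iff.symm
  rw [heq]; exact h

/-- Approach a point `c` of the parameter interval from the left. -/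
lemma approach_left {γ : ℝ → X} {a b c : ℝ} (hcont : ContinuousOn γ (Icc a b))
    (hac : a < c) (hcb : c ≤ b) :
    ∃ t : ℕ → ℝ, (∀ j, t j ∈ Icc a b) ∧ (∀ j, a ≤ t j ∧ t j < c) ∧
      Tendsto (fun j => γ (t j)) atTop (𝓝 (γ c)) := by
  have hca : (0 : ℝ) < c - a := by linarith
  refine ⟨fun j => c - (c - a) / ((j : ℝ) + 2), ?_, ?_, ?_⟩
  · intro j
    have h2 : (0 : ℝ) < (j : ℝ) + 2 := by positivity
    have hle : (c - a) / ((j : ℝ) + 2) ≤ c - a :=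
      div_le_self hca.le (by linarith [Nat.cast_nonneg (α := ℝ) j])
    have hpos : 0 < (c - a) / ((j : ℝ) + 2) := div_pos hca h2
    constructor <;> [linarith; linarith]
  · intro j
    have h2 : (0 : ℝ) < (j : ℝ) + 2 := by positivity
    have hle : (c - a) / ((j : ℝ) + 2) ≤ c - a :=
      div_le_self hca.le (by linarith [Nat.cast_nonneg (α := ℝ) j])
    have hpos : 0 < (c - a) / ((j : ℝ) + 2) := div_pos hca h2
    constructor <;> linarith
  · have h0 : Tendsto (fun j : ℕ => (c - a) / ((j : ℝ) + 2)) atTop (𝓝 0) :=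
      tendsto_const_nhds.div_atTop
        (tendsto_atTop_add_const_right _ 2 tendsto_natCast_atTop_atTop)
    have ht : Tendsto (fun j : ℕ => c - (c - a) / ((j : ℝ) + 2)) atTop (𝓝 c) := by
      have h1 : Tendsto (fun _ : ℕ => c) atTop (𝓝 c) := tendsto_const_nhds
      simpa using h1.sub h0
    have hmem : ∀ j : ℕ, c - (c - a) / ((j : ℝ) + 2) ∈ Icc a b := by
      intro j
      have h2 : (0 : ℝ) < (j : ℝ) + 2 := by positivity
      have hle : (c - a) / ((j : ℝ) + 2) ≤ c - a :=
        div_le_self hca.le (by linarith [Nat.cast_nonneg (α := ℝ) j])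
      have hpos : 0 < (c - a) / ((j : ℝ) + 2) := div_pos hca h2
      constructor <;> linarith
    have hc_mem : c ∈ Icc a b := ⟨hac.le, hcb⟩
    exact (hcont c hc_mem).tendsto.comp
      (tendsto_nhdsWithin_iff.mpr ⟨ht, Filter.Eventually.of_forall hmem⟩)

/-- Approach a point `c` of the parameter interval from the right. -/
lemma approach_right {γ : ℝ → X} {a b c : ℝ} (hcont : ContinuousOn γ (Icc a b))
    (hca : a ≤ c) (hcb : c < b) :
    ∃ t : ℕ → ℝ, (∀ j, t j ∈ Icc a b) ∧ (∀ j, c < t j ∧ t j ≤ b) ∧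
      Tendsto (fun j => γ (t j)) atTop (𝓝 (γ c)) := by
  have hbc : (0 : ℝ) < b - c := by linarith
  refine ⟨fun j => c + (b - c) / ((j : ℝ) + 2), ?_, ?_, ?_⟩
  · intro j
    have h2 : (0 : ℝ) < (j : ℝ) + 2 := by positivity
    have hle : (b - c) / ((j : ℝ) + 2) ≤ b - c :=
      div_le_self hbc.le (by linarith [Nat.cast_nonneg (α := ℝ) j])
    have hpos : 0 < (b - c) / ((j : ℝ) + 2) := div_pos hbc h2
    constructor <;> linarith
  · intro j
    have h2 : (0 : ℝ) < (j : ℝ) + 2 := by positivity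
    have hle : (b - c) / ((j : ℝ) + 2) ≤ b - c :=
      div_le_self hbc.le (by linarith [Nat.cast_nonneg (α := ℝ) j])
    have hpos : 0 < (b - c) / ((j : ℝ) + 2) := div_pos hbc h2
    constructor <;> linarith
  · have h0 : Tendsto (fun j : ℕ => (b - c) / ((j : ℝ) + 2)) atTop (𝓝 0) :=
      tendsto_const_nhds.div_atTop
        (tendsto_atTop_add_const_right _ 2 tendsto_natCast_atTop_atTop)
    have ht : Tendsto (fun j : ℕ => c + (b - c) / ((j : ℝ) + 2)) atTop (𝓝 c) := by
      have h1 : Tendsto (fun _ : ℕ => c) atTop (𝓝 c) := tendsto_const_nhds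
      simpa using h1.add h0
    have hmem : ∀ j : ℕ, c + (b - c) / ((j : ℝ) + 2) ∈ Icc a b := by
      intro j
      have h2 : (0 : ℝ) < (j : ℝ) + 2 := by positivity
      have hle : (b - c) / ((j : ℝ) + 2) ≤ b - c :=
        div_le_self hbc.le (by linarith [Nat.cast_nonneg (α := ℝ) j])
      have hpos : 0 < (b - c) / ((j : ℝ) + 2) := div_pos hbc h2
      constructor <;> linarith
    have hc_mem : c ∈ Icc a b := ⟨hca, hcb.le⟩
    exact (hcont c hc_mem).tendsto.comp
      (tendsto_nhdsWithin_iff.mpr ⟨ht, Filter.Eventually.of_forall hmem⟩)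

/-- Every point is the limit of a sequence of points chronologically below it. -/
lemma exists_chron_seq_below (L : LorentzianPreLengthSpace X)
    (hpc : L.CausallyPathConnected) (hloc : L.Localizable) (p : X) :
    ∃ q : ℕ → X, (∀ k, L.chron (q k) p) ∧ Tendsto q atTop (𝓝 p) := by
  obtain ⟨Ω, -, hpΩ, -, ω, -, -, -, -, -, hI, -⟩ := hloc p
  obtain ⟨z, hz⟩ := (hI p hpΩ).2
  have hzp : L.chron z p := hz.1
  obtain ⟨γ, a, b, ⟨hab, ⟨Kl, hKl⟩, -, hmono⟩, hga, hgb⟩ := hpc.2 z p hzp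
  obtain ⟨t, htmem, htlt, htend⟩ := approach_left hKl.continuousOn hab le_rfl
  refine ⟨fun k => γ (t k), fun k => ?_, ?_⟩
  · have := hmono (htmem k) (right_mem_Icc.2 hab.le) (htlt k).2
    rwa [hgb] at this
  · rwa [hgb] at htend

/-- Every point is the limit of a sequence of points chronologically above it. -/
lemma exists_chron_seq_above (L : LorentzianPreLengthSpace X)
    (hpc : L.CausallyPathConnected) (hloc : L.Localizable) (p : X) :
    ∃ q : ℕ → X, (∀ k, L.chron p (q k)) ∧ Tendsto q atTop (𝓝 p) := by
  obtain ⟨Ω, -, hpΩ, -, ω, -, -, -, -, -, hI, -⟩ := hloc p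
  obtain ⟨z, hz⟩ := (hI p hpΩ).1
  have hzp : L.chron p z := hz.1
  obtain ⟨γ, a, b, ⟨hab, ⟨Kl, hKl⟩, -, hmono⟩, hga, hgb⟩ := hpc.2 p z hzp
  obtain ⟨t, htmem, htlt, htend⟩ := approach_right hKl.continuousOn le_rfl hab
  refine ⟨fun k => γ (t k), fun k => ?_, ?_⟩
  · have := hmono (left_mem_Icc.2 hab.le) (htmem k) (htlt k).1
    rwa [hga] at this
  · rwa [hga] at htend

/-- A timelike curve from inside a closed set to outside it passes through the
topological boundary. -/
lemma exists_exit (L : LorentzianPreLengthSpace X) {K : Set X} (hKc : IsClosed K)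
    {x y : X} (hx : x ∈ interior K) (hy : y ∉ K) {γ : ℝ → X} {a b : ℝ}
    (hcurve : L.IsFutureTimelikeCurve γ a b) (hga : γ a = x) (hgb : γ b = y) :
    ∃ z, z ∈ K ∧ z ∉ interior K ∧ L.chron x z ∧ L.chron z y := by
  obtain ⟨hab, ⟨Kl, hKl⟩, -, hmono⟩ := hcurve
  have hcont : ContinuousOn γ (Icc a b) := hKl.continuousOn
  set S : Set ℝ := Icc a b ∩ γ ⁻¹' (interior K)ᶜ with hS
  have hScl : IsClosed S :=
    hcont.preimage_isClosed_of_isClosed isClosed_Icc isOpen_interior.isClosed_compl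
  have hSb : b ∈ S := by
    refine ⟨right_mem_Icc.2 hab.le, ?_⟩
    simp only [Set.mem_preimage, Set.mem_compl_iff, hgb]
    exact fun h => hy (interior_subset h)
  have hbdd : BddBelow S := ⟨a, fun t ht => ht.1.1⟩
  set c := sInf S with hc
  have hcS : c ∈ S := hScl.csInf_mem ⟨b, hSb⟩ hbdd
  have hcIcc : c ∈ Icc a b := hcS.1
  have hcnot : γ c ∉ interior K := hcS.2
  have hale : a ≤ c := by rw [hc]; exact le_csInf ⟨b, hSb⟩ fun t ht => ht.1.1
  have hac : a < c := by
    rcases lt_or_eq_of_le hale with h | h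
    · exact h
    · exfalso; apply hcnot; rw [← h, hga]; exact hx
  have hγcK : γ c ∈ K := by
    obtain ⟨t, htmem, htlt, htend⟩ := approach_left hcont hac hcIcc.2
    refine hKc.mem_of_tendsto htend (Filter.Eventually.of_forall fun j => ?_)
    have hnS : t j ∉ S := fun hmem =>
      absurd (csInf_le hbdd hmem) (not_le.2 (htlt j).2)
    have : γ (t j) ∈ interior K := by
      by_contra hcon
      exact hnS ⟨htmem j, hcon⟩
    exact interior_subset this
  have hcb : c < b := by
    rcases lt_or_eq_of_le hcIcc.2 with h | h
    · exact h
    · exfalso; apply hy; rw [← hgb, ← h]; exact hγcK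
  refine ⟨γ c, hγcK, hcnot, ?_, ?_⟩
  · rw [← hga]; exact hmono (left_mem_Icc.2 hab.le) hcIcc hac
  · rw [← hgb]; exact hmono hcIcc (right_mem_Icc.2 hab.le) hcb

variable {Y : Type*} [MetricSpace Y]

/-- Chronology transfers back and forth along a distance homothetic map. -/
lemma chron_transfer {LX : LorentzianPreLengthSpace X} {LY : LorentzianPreLengthSpace Y}
    {f : X → Y} (hhom : DistanceHomothetic LX LY f) (p q : X) :
    LY.chron (f p) (f q) ↔ LX.chron p q := by
  obtain ⟨c, hc, h⟩ := hhom
  rw [← LY.tau_pos_iff, ← LX.tau_pos_iff, h p q]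
  have hc' : (c : ℝ≥0∞) ≠ 0 := by exact_mod_cast hc.ne'
  simp only [pos_iff_ne_zero, ne_eq, mul_eq_zero, hc', false_or]

/-- Key continuity statement: any (set-theoretic) lift along `f` of a convergent
sequence converges, provided `X` is stably causal. -/
lemma ginv_tendsto [LocallyCompactSpace X]
    (LX : LorentzianPreLengthSpace X) (LY : LorentzianPreLengthSpace Y)
    (hXpc : LX.CausallyPathConnected) (hXloc : LX.Localizable) (hXsc : LX.StablyCausal)
    {f : X → Y} (hhom : DistanceHomothetic LX LY f)
    {u : ℕ → Y} {v : Y} {p : ℕ → X} {q : X}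
    (hfu : ∀ n, f (p n) = u n) (hfv : f q = v)
    (hu : Tendsto u atTop (𝓝 v)) : Tendsto p atTop (𝓝 q) := by
  obtain ⟨qm, hqmc, hqmt⟩ := exists_chron_seq_below LX hXpc hXloc q
  obtain ⟨qp, hqpc, hqpt⟩ := exists_chron_seq_above LX hXpc hXloc q
  have hev : ∀ k, ∀ᶠ n in atTop, LX.chron (qm k) (p n) ∧ LX.chron (p n) (qp k) := by
    intro k
    have hA : LY.chron (f (qm k)) v := by
      rw [← hfv]; exact (chron_transfer hhom (qm k) q).2 (hqmc k)
    have hB : LY.chron v (f (qp k)) := by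
      rw [← hfv]; exact (chron_transfer hhom q (qp k)).2 (hqpc k)
    have hopenA : IsOpen {w : Y | LY.chron (f (qm k)) w} :=
      (LY.isOpen_chron).preimage (Continuous.prodMk_right (f (qm k)))
    have hopenB : IsOpen {w : Y | LY.chron w (f (qp k))} :=
      (LY.isOpen_chron).preimage (continuous_id.prodMk continuous_const)
    have hevA : ∀ᶠ n in atTop, u n ∈ {w : Y | LY.chron (f (qm k)) w} :=
      hu.eventually_mem (hopenA.mem_nhds hA)
    have hevB : ∀ᶠ n in atTop, u n ∈ {w : Y | LY.chron w (f (qp k))} :=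
      hu.eventually_mem (hopenB.mem_nhds hB)
    filter_upwards [hevA, hevB] with n hA' hB'
    constructor
    · refine (chron_transfer hhom (qm k) (p n)).1 ?_
      rw [hfu n]; exact hA'
    · refine (chron_transfer hhom (p n) (qp k)).1 ?_
      rw [hfu n]; exact hB'
  by_contra hcon
  rw [Metric.tendsto_atTop] at hcon
  push_neg at hcon
  obtain ⟨ε, hε, hfreq⟩ := hcon
  obtain ⟨K, hKcomp, hKnhds⟩ := exists_compact_mem_nhds q
  have hqint : q ∈ interior K := mem_interior_iff_mem_nhds.2 hKnhds
  obtain ⟨δ, hδ, hball⟩ := Metric.isOpen_iff.1 isOpen_interior q hqint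
  have hqmK : ∀ᶠ k in atTop, qm k ∈ interior K :=
    hqmt.eventually_mem (isOpen_interior.mem_nhds hqint)
  obtain ⟨k₀, hk₀⟩ := eventually_atTop.1 hqmK
  have key : ∀ k : ℕ, ∃ z : X, z ∈ K ∧ min ε δ ≤ dist z q ∧
      LX.causal (qm (k + k₀)) z ∧ LX.causal z (qp (k + k₀)) := by
    intro k
    set k' := k + k₀ with hk'
    have hqmK' : qm k' ∈ interior K := hk₀ k' (Nat.le_add_left k₀ k)
    obtain ⟨N, hN⟩ := eventually_atTop.1 (hev k')
    obtain ⟨n, hnN, hd⟩ := hfreq N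
    obtain ⟨h1, h2⟩ := hN n hnN
    by_cases hin : p n ∈ K
    · exact ⟨p n, hin, le_trans (min_le_left _ _) hd,
        LX.chron_imp_causal h1, LX.chron_imp_causal h2⟩
    · obtain ⟨γ, a, b, hcurve, hga, hgb⟩ := hXpc.2 (qm k') (p n) h1
      obtain ⟨z, hzK, hznint, hz1, hz2⟩ :=
        exists_exit LX hKcomp.isClosed hqmK' hin hcurve hga hgb
      have hzd : δ ≤ dist z q := by
        by_contra hlt
        push_neg at hlt
        exact hznint (hball (Metric.mem_ball.2 hlt))
      exact ⟨z, hzK, le_trans (min_le_right _ _) hzd,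
        LX.chron_imp_causal hz1, LX.chron_imp_causal (LX.chron_trans hz2 h2)⟩
  choose x hx1 hx2 hx3 hx4 using key
  obtain ⟨xlim, hxlimK, φ, hφmono, hconv⟩ := hKcomp.tendsto_subseq hx1
  have hqm' : Tendsto (fun j => qm (φ j + k₀)) atTop (𝓝 q) :=
    hqmt.comp ((tendsto_add_atTop_nat k₀).comp hφmono.tendsto_atTop)
  have hqp' : Tendsto (fun j => qp (φ j + k₀)) atTop (𝓝 q) :=
    hqpt.comp ((tendsto_add_atTop_nat k₀).comp hφmono.tendsto_atTop)
  have h1 : (q, xlim) ∈ LX.Kplus :=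
    LX.mem_Kplus_of_limit hqm' hconv (Filter.Eventually.of_forall fun j => hx3 (φ j))
  have h2 : (xlim, q) ∈ LX.Kplus :=
    LX.mem_Kplus_of_limit hconv hqp' (Filter.Eventually.of_forall fun j => hx4 (φ j))
  have heq : q = xlim := hXsc q xlim h1 h2
  have hge : min ε δ ≤ dist xlim q :=
    ge_of_tendsto (hconv.dist tendsto_const_nhds)
      (Filter.Eventually.of_forall fun j => hx2 (φ j))
  rw [← heq, dist_self] at hge
  exact absurd hge (not_le.2 (lt_min hε hδ))

end Aux

/-- stable causality is transferred along surjective, locally causally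
Lipschitz, distance homothetic maps between Lorentzian length spaces with locally compact
metrics. -/
theorem distanceHomothetic_stablyCausal {X Y : Type*}
    [MetricSpace X] [MetricSpace Y] [LocallyCompactSpace X] [LocallyCompactSpace Y]
    (LX : LorentzianPreLengthSpace X) (LY : LorentzianPreLengthSpace Y)
    (hX : LX.IsLengthSpace) (hY : LY.IsLengthSpace) (hXsc : LX.StablyCausal)
    (f : X → Y) (hsurj : Function.Surjective f) (hhom : DistanceHomothetic LX LY f)
    (hlip : LocallyCausallyLipschitz LX f) :
    LY.StablyCausal := by
  intro uu vv huv hvu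
  obtain ⟨g, hg⟩ := hsurj.hasRightInverse
  have hgc : Continuous g := by
    rw [continuous_iff_seqContinuous]
    intro s a hs
    exact ginv_tendsto LX LY hX.1 hX.2.2.1 hXsc hhom (fun n => hg (s n)) (hg a) hs
  set R : Set (Y × Y) := (fun w : Y × Y => ((g w.1, g w.2) : X × X)) ⁻¹' LX.Kplus with hR
  have hRmem : R ∈ {S : Set (Y × Y) | IsClosed S ∧
      (∀ a b c : Y, (a, b) ∈ S → (b, c) ∈ S → (a, c) ∈ S) ∧
      {pq : Y × Y | LY.causal pq.1 pq.2} ⊆ S} := by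
    refine ⟨(LX.isClosed_Kplus).preimage
      ((hgc.comp continuous_fst).prodMk (hgc.comp continuous_snd)), ?_, ?_⟩
    · intro a b c hab hbc
      exact LX.Kplus_trans hab hbc
    · rintro ⟨a, b⟩ hab
      have hab' : LY.causal a b := hab
      obtain ⟨σ, hσc, hσt⟩ := exists_chron_seq_above LY hY.1 hY.2.2.1 b
      have hchron : ∀ k, LY.chron a (σ k) := by
        intro k
        have h1 : 0 < LY.tau b (σ k) := LY.tau_pos_iff.2 (hσc k)
        have h2 := LY.tau_rev_triangle hab' (LY.chron_imp_causal (hσc k))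
        exact LY.tau_pos_iff.1
          (lt_of_lt_of_le h1 (le_trans (self_le_add_left _ _) h2))
      have hXchron : ∀ k, LX.chron (g a) (g (σ k)) := by
        intro k
        refine (chron_transfer hhom (g a) (g (σ k))).1 ?_
        rw [hg a, hg (σ k)]
        exact hchron k
      have hlim : Tendsto (fun k => g (σ k)) atTop (𝓝 (g b)) :=
        (hgc.tendsto b).comp hσt
      exact LX.mem_Kplus_of_limit tendsto_const_nhds hlim
        (Filter.Eventually.of_forall fun k => LX.chron_imp_causal (hXchron k))
  have h1 : (g uu, g vv) ∈ LX.Kplus := Set.mem_sInter.1 huv R hRmem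
  have h2 : (g vv, g uu) ∈ LX.Kplus := Set.mem_sInter.1 hvu R hRmem
  have hgeq : g uu = g vv := hXsc _ _ h1 h2
  calc uu = f (g uu) := (hg uu).symm
    _ = f (g vv) := by rw [hgeq]
    _ = vv := hg vv
end

section
/- Let (X, d, ≪, ≤, τ) and (Y, d̃, ≪̃, ≤̃, τ̃) be Lorentzian length spaces such that X is strongly causal and (Y, d̃) is locally compact, and let f : X → Y be a surjective distance homothetic map (with constant c > 0) that is locally causally Lipschitz. If γ : [a, b] → X is a maximal future directed causal curve from x to y, i.e. L_τ(γ) = τ(x, y), then f ∘ γ : [a, b] → Y is a maximal future directed causal curve from f(x) to f(y), i.e. L_τ̃(f ∘ γ) = τ̃(f(x), f(y)); moreover L_τ̃(f ∘ γ) = c·L_τ(γ). -/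
open scoped NNReal ENNReal
open Set Filter Topology

section AuxLemmas

variable {X Y : Type*} [MetricSpace X] [MetricSpace Y]

/-- Alexandrov diamonds are metrically open in a strongly causal space. -/
lemma LorentzianPreLengthSpace.alex_open (L : LorentzianPreLengthSpace X)
    (hsc : L.StronglyCausal) (u v : X) : IsOpen (L.Iplus u ∩ L.Iminus v) := by
  have h : IsOpen[L.AlexandrovTopology] (L.Iplus u ∩ L.Iminus v) :=
    TopologicalSpace.GenerateOpen.basic _ ⟨u, v, rfl⟩
  rw [hsc] at h
  exact h

/-- In a strongly causal space, every point of a proper open set lies in a nonempty finite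
intersection of diamonds contained in that set. -/
lemma LorentzianPreLengthSpace.diamond_extract (L : LorentzianPreLengthSpace X)
    (hsc : L.StronglyCausal) {p : X} {B : Set X} (hB : IsOpen B) (hpB : p ∈ B)
    (hBne : B ≠ Set.univ) :
    ∃ 𝒟 : Set (Set X), 𝒟.Finite ∧ 𝒟.Nonempty ∧
      (∀ D ∈ 𝒟, ∃ u v, D = L.Iplus u ∩ L.Iminus v) ∧ p ∈ ⋂₀ 𝒟 ∧ ⋂₀ 𝒟 ⊆ B := by
  have hgen : (inferInstance : TopologicalSpace X) =
      TopologicalSpace.generateFrom {s : Set X | ∃ x y : X, s = L.Iplus x ∩ L.Iminus y} :=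
    hsc.symm
  have hbasis := TopologicalSpace.isTopologicalBasis_of_subbasis hgen
  obtain ⟨v, hv, hpv, hvB⟩ := hbasis.exists_subset_of_mem_open hpB hB
  obtain ⟨F, ⟨hFfin, hFsub⟩, rfl⟩ := hv
  refine ⟨F, hFfin, ?_, fun D hD => hFsub hD, hpv, hvB⟩
  rcases Set.eq_empty_or_nonempty F with rfl | h
  · exfalso
    apply hBne
    apply Set.univ_subset_iff.1
    simpa using hvB
  · exact h

variable {LX : LorentzianPreLengthSpace X} {LY : LorentzianPreLengthSpace Y}
  {f : X → Y} {c : ℝ≥0}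

/-- A distance homothetic map preserves and reflects the chronological relation. -/
lemma chron_iff_of_hom (hc : 0 < c)
    (hhom : ∀ p q : X, LY.tau (f p) (f q) = (c : ℝ≥0∞) * LX.tau p q) (p q : X) :
    LY.chron (f p) (f q) ↔ LX.chron p q := by
  rw [← LY.tau_pos_iff, ← LX.tau_pos_iff, hhom, pos_iff_ne_zero, pos_iff_ne_zero]
  simp [mul_eq_zero, hc.ne']

/-- A distance homothetic map is injective when the source is strongly causal. -/
lemma injective_of_hom (hsc : LX.StronglyCausal) (hc : 0 < c)
    (hhom : ∀ p q : X, LY.tau (f p) (f q) = (c : ℝ≥0∞) * LX.tau p q) :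
    Function.Injective f := by
  intro p q hfpq
  by_contra hne
  have hd : 0 < dist p q := dist_pos.2 hne
  have hqB : q ∉ Metric.ball p (dist p q / 2) := by
    simp [Metric.mem_ball, dist_comm q p]
  obtain ⟨𝒟, hfin, hne', hdiam, hp, hsub⟩ := LX.diamond_extract hsc Metric.isOpen_ball
    (Metric.mem_ball_self (by linarith)) (fun h => hqB (h ▸ Set.mem_univ q))
  apply hqB
  apply hsub
  intro D hD
  obtain ⟨u, v, rfl⟩ := hdiam D hD
  obtain ⟨hup, hpv⟩ := Set.mem_sInter.1 hp _ hD
  have hcancel : ∀ r s s' : X, f s = f s' → LX.tau r s = LX.tau r s' := by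
    intro r s s' h
    have h1 : (c:ℝ≥0∞) * LX.tau r s = (c:ℝ≥0∞) * LX.tau r s' := by
      rw [← hhom r s, ← hhom r s', h]
    exact (ENNReal.mul_right_inj (by exact_mod_cast hc.ne') ENNReal.coe_ne_top).1 h1
  have hcancel' : ∀ r s s' : X, f s = f s' → LX.tau s r = LX.tau s' r := by
    intro r s s' h
    have h1 : (c:ℝ≥0∞) * LX.tau s r = (c:ℝ≥0∞) * LX.tau s' r := by
      rw [← hhom s r, ← hhom s' r, h]
    exact (ENNReal.mul_right_inj (by exact_mod_cast hc.ne') ENNReal.coe_ne_top).1 h1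
  constructor
  · show LX.chron u q
    rw [← LX.tau_pos_iff, ← hcancel u p q hfpq]
    exact LX.tau_pos_iff.2 hup
  · show LX.chron q v
    rw [← LX.tau_pos_iff, ← hcancel' v p q hfpq]
    exact LX.tau_pos_iff.2 hpv

/-- Push-up. -/
lemma pushup (L : LorentzianPreLengthSpace X) {r p q : X}
    (h1 : L.chron r p) (h2 : L.causal p q) : L.chron r q := by
  rw [← L.tau_pos_iff]
  calc (0 : ℝ≥0∞) < L.tau r p := L.tau_pos_iff.2 h1
    _ ≤ L.tau r p + L.tau p q := le_self_add
    _ ≤ L.tau r q := L.tau_rev_triangle (L.chron_imp_causal h1) h2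

/-- A timelike curve is a causal curve. -/
lemma LorentzianPreLengthSpace.IsFutureTimelikeCurve.toCausal {L : LorentzianPreLengthSpace X}
    {g : ℝ → X} {a b : ℝ} (h : L.IsFutureTimelikeCurve g a b) : L.IsFutureCausalCurve g a b :=
  ⟨h.1, h.2.1, h.2.2.1, fun s hs t ht hst => L.chron_imp_causal (h.2.2.2 hs ht hst)⟩

/-- Approximating sequence from the chronological past, along a timelike curve. -/
lemma exists_chron_seq (L : LorentzianPreLengthSpace X)
    (hcpc : ∀ x y : X, L.chron x y → ∃ γ : ℝ → X, ∃ a b : ℝ,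
      L.IsFutureTimelikeCurve γ a b ∧ γ a = x ∧ γ b = y)
    {w p : X} (h : L.chron w p) :
    ∃ r : ℕ → X, (∀ n, L.chron w (r n) ∧ L.chron (r n) p) ∧
      Filter.Tendsto r Filter.atTop (nhds p) := by
  obtain ⟨g, α, β, hg, hα, hβ⟩ := hcpc w p h
  obtain ⟨hab, ⟨K, hK⟩, -, hmono⟩ := hg
  set t : ℕ → ℝ := fun n => β - (β - α) / (n + 2) with ht
  have htmem : ∀ n, α < t n ∧ t n < β := by
    intro n
    have h2 : (0:ℝ) < (n:ℝ) + 2 := by positivity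
    constructor
    · have hn0 : (0:ℝ) ≤ (n:ℝ) := Nat.cast_nonneg n
      have : (β - α) / (n + 2) < β - α := by
        apply div_lt_self (by linarith) (by linarith)
      simp only [ht]; linarith
    · have : 0 < (β - α) / (n + 2) := div_pos (by linarith) h2
      simp only [ht]; linarith
  have htIcc : ∀ n, t n ∈ Set.Icc α β := fun n => ⟨(htmem n).1.le, (htmem n).2.le⟩
  have httend : Filter.Tendsto t Filter.atTop (nhds β) := by
    have h1 : Filter.Tendsto (fun n : ℕ => (β - α) / (n + 2)) Filter.atTop (nhds 0) := by
      apply Filter.Tendsto.div_atTop tendsto_const_nhds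
      exact Filter.tendsto_atTop_add_const_right _ 2 tendsto_natCast_atTop_atTop
    have := tendsto_const_nhds (x := β) (f := Filter.atTop (α := ℕ)) |>.sub h1
    simpa using this
  refine ⟨fun n => g (t n), fun n => ?_, ?_⟩
  · constructor
    · rw [← hα]
      exact hmono (Set.left_mem_Icc.2 hab.le) (htIcc n) (htmem n).1
    · rw [← hβ]
      exact hmono (htIcc n) (Set.right_mem_Icc.2 hab.le) (htmem n).2
  · have hcont : ContinuousOn g (Set.Icc α β) := hK.continuousOn
    have hcw : ContinuousWithinAt g (Set.Icc α β) β :=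
      hcont β (Set.right_mem_Icc.2 hab.le)
    have : Filter.Tendsto t Filter.atTop (nhdsWithin β (Set.Icc α β)) := by
      rw [tendsto_nhdsWithin_iff]
      exact ⟨httend, Filter.Eventually.of_forall htIcc⟩
    have := hcw.tendsto.comp this
    rwa [hβ] at this

/-- Chaining local facts along an interval. -/
lemma chain_lemma {P : ℝ → ℝ → Prop} {a b δ : ℝ} (hδ : 0 < δ)
    (comp : ∀ {u v w : ℝ}, u ∈ Set.Icc a b → v ∈ Set.Icc a b → w ∈ Set.Icc a b →
      u < v → v < w → P u v → P v w → P u w)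
    (base : ∀ {u v : ℝ}, u ∈ Set.Icc a b → v ∈ Set.Icc a b → u < v → v - u ≤ δ → P u v) :
    ∀ u ∈ Set.Icc a b, ∀ v ∈ Set.Icc a b, u < v → P u v := by
  have key : ∀ n : ℕ, ∀ u ∈ Set.Icc a b, ∀ v ∈ Set.Icc a b, u < v → v - u ≤ n * δ → P u v := by
    intro n
    induction n with
    | zero => intro u _ v _ huv h; norm_num at h; linarith
    | succ n ih =>
      intro u hu v hv huv h
      by_cases hle : v - u ≤ δ
      · exact base hu hv huv hle
      · push_neg at hle
        have hw1 : u < v - δ := by linarith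
        have hwIcc : v - δ ∈ Set.Icc a b := ⟨by linarith [hu.1], by linarith [hv.2]⟩
        refine comp hu hwIcc hv hw1 (by linarith) ?_ ?_
        · apply ih u hu _ hwIcc hw1
          push_cast at h
          linarith
        · exact base hwIcc hv (by linarith) (by linarith)
  intro u hu v hv huv
  obtain ⟨n, hn⟩ := exists_nat_ge ((v - u) / δ)
  exact key n u hu v hv huv (by rw [div_le_iff₀ hδ] at hn; linarith)

end AuxLemmas
section MainLocal

open Set Filter Topology

variable {X Y : Type*} [MetricSpace X] [MetricSpace Y]
variable {LX : LorentzianPreLengthSpace X} {LY : LorentzianPreLengthSpace Y}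
  {f : X → Y} {c : ℝ≥0}

/-- The key local statement: around every point of `X` there is an open neighborhood on which
`f` preserves the causal relation and is causally Lipschitz. -/
lemma local_good (hsc : LX.StronglyCausal)
    (hXtl : ∀ x y : X, LX.chron x y → ∃ γ : ℝ → X, ∃ a b : ℝ,
      LX.IsFutureTimelikeCurve γ a b ∧ γ a = x ∧ γ b = y)
    (hYtl : ∀ x y : Y, LY.chron x y → ∃ γ : ℝ → Y, ∃ a b : ℝ,
      LY.IsFutureTimelikeCurve γ a b ∧ γ a = x ∧ γ b = y)
    (hYlcc : LY.LocallyCausallyClosed)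
    (hsurj : Function.Surjective f) (hc : 0 < c)
    (hhom : ∀ p q : X, LY.tau (f p) (f q) = (c : ℝ≥0∞) * LX.tau p q)
    (hlip : LocallyCausallyLipschitz LX f)
    (p₀ : X) (hnt : ∃ w : X, w ≠ p₀) :
    ∃ (N : Set X) (M : ℝ), IsOpen N ∧ p₀ ∈ N ∧ 0 < M ∧
      ∀ p ∈ N, ∀ q ∈ N, LX.causal p q →
        LY.causal (f p) (f q) ∧ dist (f p) (f q) ≤ M * dist p q := by
  classical
  have hchron := chron_iff_of_hom (LX := LX) (LY := LY) hc hhom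
  obtain ⟨W, hWo, hWp, M, hM, hlipW⟩ := hlip p₀
  obtain ⟨U, hUo, hUz, hUcc⟩ := hYlcc (f p₀)
  obtain ⟨rU, hrU, hballU⟩ := Metric.isOpen_iff.1 hUo _ hUz
  obtain ⟨wst, hwst⟩ := hnt
  set ρ : ℝ := min (rU / (3 * M + 1)) (dist p₀ wst) with hρdef
  have hdw : 0 < dist p₀ wst := dist_pos.2 (Ne.symm hwst)
  have hρ : 0 < ρ := lt_min (by positivity) hdw
  have hρrU : 3 * M * ρ < rU := by
    have h1 : ρ ≤ rU / (3 * M + 1) := min_le_left _ _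
    have h2 : ρ * (3 * M + 1) ≤ rU := by
      rw [← le_div_iff₀ (by positivity)]
      exact h1
    nlinarith
  -- the small proper open set around p₀
  have hwstB : wst ∉ W ∩ Metric.ball p₀ ρ := by
    intro hmem
    have := hmem.2
    rw [Metric.mem_ball, dist_comm] at this
    exact absurd this (not_lt.2 (min_le_right _ _))
  obtain ⟨𝒟, hfin, h𝒟ne, hdiam, hpG, hGsub⟩ := LX.diamond_extract hsc
    (hWo.inter Metric.isOpen_ball) ⟨hWp, Metric.mem_ball_self hρ⟩
    (fun h => hwstB (h ▸ Set.mem_univ wst))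
  set G : Set X := ⋂₀ 𝒟 with hGdef
  have hGopen : IsOpen G := by
    apply Set.Finite.isOpen_sInter hfin
    intro D hD
    obtain ⟨u, v, rfl⟩ := hdiam D hD
    exact LX.alex_open hsc u v
  have hGW : G ⊆ W := fun z hz => (hGsub hz).1
  have hGball : G ⊆ Metric.ball p₀ ρ := fun z hz => (hGsub hz).2
  obtain ⟨D₀, hD₀⟩ := h𝒟ne
  obtain ⟨u₁, v₁, rfl⟩ := hdiam D₀ hD₀
  obtain ⟨hu₁p, hpv₁⟩ := Set.mem_sInter.1 hpG _ hD₀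
  -- a chronological-past point inside G
  obtain ⟨r₀, hr₀, hr₀tend⟩ := exists_chron_seq LX hXtl hu₁p
  obtain ⟨n₀, hn₀⟩ := Filter.eventually_atTop.1 (hr₀tend.eventually (hGopen.mem_nhds hpG))
  set ut : X := r₀ n₀ with hutdef
  have hutG : ut ∈ G := hn₀ n₀ le_rfl
  have hutp : LX.chron ut p₀ := (hr₀ n₀).2
  -- the neighborhood
  set S : Set X := (LX.Iplus ut ∩ LX.Iminus v₁) ∩ G with hSdef
  have hSopen : IsOpen S := (LX.alex_open hsc ut v₁).inter hGopen
  have hpS : p₀ ∈ S := ⟨⟨hutp, hpv₁⟩, hpG⟩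
  have hSG : S ⊆ G := fun z hz => hz.2
  -- f maps S into U
  have hfS : ∀ w ∈ S, f w ∈ U := by
    intro w hw
    apply hballU
    rw [Metric.mem_ball]
    have hwG : w ∈ G := hw.2
    have hutw : LX.chron ut w := hw.1.1
    have h1 : dist (f ut) (f w) ≤ M * dist ut w :=
      hlipW ut (hGW hutG) w (hGW hwG) (LX.chron_imp_causal hutw)
    have h2 : dist (f ut) (f p₀) ≤ M * dist ut p₀ :=
      hlipW ut (hGW hutG) p₀ hWp (LX.chron_imp_causal hutp)
    have hd1 : dist ut p₀ < ρ := Metric.mem_ball.1 (hGball hutG)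
    have hd2 : dist w p₀ < ρ := Metric.mem_ball.1 (hGball hwG)
    have hd3 : dist ut w ≤ dist ut p₀ + dist p₀ w := dist_triangle _ _ _
    rw [dist_comm p₀ w] at hd3
    calc dist (f w) (f p₀) ≤ dist (f w) (f ut) + dist (f ut) (f p₀) := dist_triangle _ _ _
      _ = dist (f ut) (f w) + dist (f ut) (f p₀) := by rw [dist_comm]
      _ ≤ M * dist ut w + M * dist ut p₀ := add_le_add h1 h2
      _ ≤ M * (dist ut p₀ + dist w p₀) + M * dist ut p₀ := by nlinarith
      _ < M * (ρ + ρ) + M * ρ := by nlinarith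
      _ = 3 * M * ρ := by ring
      _ < rU := hρrU
  -- main causal claim
  refine ⟨S, M, hSopen, hpS, hM, fun p hp q hq hpq => ⟨?_, ?_⟩⟩
  swap
  · exact hlipW p (hGW (hSG hp)) q (hGW (hSG hq)) hpq
  -- causality
  obtain ⟨r, hr, hrtend⟩ := exists_chron_seq LX hXtl (hp.1.1 : LX.chron ut p)
  obtain ⟨Wp, hWpo, hWpp, Mp, hMp, hlipWp⟩ := hlip p
  obtain ⟨N₀, hN₀⟩ := Filter.eventually_atTop.1
    (hrtend.eventually ((hSopen.inter hWpo).mem_nhds ⟨hp, hWpp⟩))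
  have hkey : ∀ n, N₀ ≤ n → LY.CausalInside U (f (r n)) (f q) := by
    intro n hn
    obtain ⟨hrS, hrW⟩ := hN₀ n hn
    have hrq : LX.chron (r n) q := pushup LX (hr n).2 hpq
    have hfrq : LY.chron (f (r n)) (f q) := (hchron _ _).2 hrq
    obtain ⟨σ, α, β, hσ, hσa, hσb⟩ := hYtl _ _ hfrq
    have hσmono := hσ.2.2.2
    have hab := hσ.1
    have himg : ∀ s ∈ Set.Icc α β, σ s ∈ U := by
      intro s hs
      rcases eq_or_lt_of_le hs.1 with h1 | h1
      · rw [← h1, hσa]; exact hfS _ hrS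
      rcases eq_or_lt_of_le hs.2 with h2 | h2
      · rw [h2, hσb]; exact hfS _ hq
      have hc1 : LY.chron (f (r n)) (σ s) := by
        rw [← hσa]; exact hσmono (Set.left_mem_Icc.2 hab.le) hs h1
      have hc2 : LY.chron (σ s) (f q) := by
        rw [← hσb]; exact hσmono hs (Set.right_mem_Icc.2 hab.le) h2
      obtain ⟨w, hw⟩ := hsurj (σ s)
      rw [← hw] at hc1 hc2 ⊢
      apply hfS
      refine ⟨⟨?_, ?_⟩, ?_⟩
      · -- chron ut w
        have : LY.chron (f ut) (f w) :=
          LY.chron_trans ((hchron _ _).2 ((hr n).1 : LX.chron ut (r n))) hc1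
        exact (hchron _ _).1 this
      · -- chron w v₁
        have : LY.chron (f w) (f v₁) :=
          LY.chron_trans hc2 ((hchron _ _).2 (hq.1.2 : LX.chron q v₁))
        exact (hchron _ _).1 this
      · -- w ∈ G
        intro D hD
        obtain ⟨u', v', rfl⟩ := hdiam D hD
        obtain ⟨hu'r, _⟩ := Set.mem_sInter.1 (hSG hrS) _ hD
        obtain ⟨_, hqv'⟩ := Set.mem_sInter.1 (hSG hq) _ hD
        constructor
        · have : LY.chron (f u') (f w) := LY.chron_trans ((hchron _ _).2 hu'r) hc1
          exact (hchron _ _).1 this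
        · have hwq : LX.chron w q := (hchron _ _).1 hc2
          exact LX.chron_trans hwq hqv'
    refine ⟨σ, α, β, hσ.toCausal, hσa, hσb, ?_⟩
    rintro z ⟨s, hs, rfl⟩
    exact himg s hs
  -- apply causal closedness
  have hpn_tend : Filter.Tendsto (fun k => f (r (k + N₀))) Filter.atTop (nhds (f p)) := by
    have h1 : Filter.Tendsto (fun k => r (k + N₀)) Filter.atTop (nhds p) :=
      hrtend.comp (Filter.tendsto_add_atTop_nat N₀)
    have h2 : Filter.Tendsto (fun k => dist (r (k + N₀)) p) Filter.atTop (nhds 0) :=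
      tendsto_iff_dist_tendsto_zero.1 h1
    have h3 : Filter.Tendsto (fun k => Mp * dist (r (k + N₀)) p) Filter.atTop (nhds 0) := by
      have := h2.const_mul Mp
      simpa using this
    apply tendsto_iff_dist_tendsto_zero.2
    apply squeeze_zero (fun k => dist_nonneg) _ h3
    intro k
    exact hlipWp (r (k + N₀)) (hN₀ _ (Nat.le_add_left _ _)).2 p hWpp
      (LX.chron_imp_causal (hr (k + N₀)).2)
  have hres := hUcc (f p) (f q) (fun k => f (r (k + N₀))) (fun _ => f q)
    (fun k => hkey _ (Nat.le_add_left _ _)) hpn_tend tendsto_const_nhds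
    (hfS p hp) (hfS q hq)
  obtain ⟨σ, α, β, hσ, hσa, hσb, -⟩ := hres
  have := hσ.2.2.2 (Set.left_mem_Icc.2 hσ.1.le) (Set.right_mem_Icc.2 hσ.1.le) hσ.1
  rwa [hσa, hσb] at this

end MainLocal
/-- a surjective, locally causally Lipschitz, distance homothetic map (with
constant `c > 0`) from a strongly causal Lorentzian length space to a Lorentzian length
space with locally compact metric sends maximal future directed causal curves to maximal
future directed causal curves, with `L_τ̃(f ∘ γ) = c · L_τ(γ)`. -/
theorem distanceHomothetic_maximal_curves {X Y : Type*}
    [MetricSpace X] [MetricSpace Y] [LocallyCompactSpace Y]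
    (LX : LorentzianPreLengthSpace X) (LY : LorentzianPreLengthSpace Y)
    (hX : LX.IsLengthSpace) (hY : LY.IsLengthSpace) (hXsc : LX.StronglyCausal)
    (f : X → Y) (hsurj : Function.Surjective f)
    (c : ℝ≥0) (hc : 0 < c)
    (hhom : ∀ p q : X, LY.tau (f p) (f q) = (c : ℝ≥0∞) * LX.tau p q)
    (hlip : LocallyCausallyLipschitz LX f)
    (x y : X) (γ : ℝ → X) (a b : ℝ)
    (hγ : LX.IsFutureCausalCurve γ a b) (hγa : γ a = x) (hγb : γ b = y)
    (hmax : LX.tauLength γ a b = LX.tau x y) :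
    LY.IsFutureCausalCurve (f ∘ γ) a b ∧
    LY.tauLength (f ∘ γ) a b = LY.tau (f x) (f y) ∧
    LY.tauLength (f ∘ γ) a b = (c : ℝ≥0∞) * LX.tauLength γ a b := by
  classical
  obtain ⟨hab, ⟨K, hK⟩, ⟨s₀, hs₀, t₀, ht₀, hnecst⟩, hmono⟩ := hγ
  have hXtl := hX.1.2
  have hYtl := hY.1.2
  have hYlcc := hY.2.1
  have hinj : Function.Injective f := injective_of_hom hXsc hc hhom
  have hnt : ∀ p₀ : X, ∃ w : X, w ≠ p₀ := by
    intro p₀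
    by_cases h : γ s₀ = p₀
    · exact ⟨γ t₀, fun e => hnecst (h.trans e.symm)⟩
    · exact ⟨γ s₀, h⟩
  -- local data along the curve
  have hloc : ∀ u : Set.Icc a b, ∃ (N : Set X) (M : ℝ), IsOpen N ∧ γ u.1 ∈ N ∧ 0 < M ∧
      ∀ p ∈ N, ∀ q ∈ N, LX.causal p q →
        LY.causal (f p) (f q) ∧ dist (f p) (f q) ≤ M * dist p q :=
    fun u => local_good hXsc hXtl hYtl hYlcc hsurj hc hhom hlip (γ u.1) (hnt _)
  choose N M hNo hNm hMpos hgood using hloc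
  have hγcont : ContinuousOn γ (Set.Icc a b) := hK.continuousOn
  have hε : ∀ u : Set.Icc a b, ∃ ε > 0, ∀ t ∈ Set.Icc a b, dist t u.1 < ε → γ t ∈ N u := by
    intro u
    have h1 : γ ⁻¹' (N u) ∈ nhdsWithin u.1 (Set.Icc a b) :=
      (hγcont u.1 u.2).preimage_mem_nhdsWithin ((hNo u).mem_nhds (hNm u))
    rw [Metric.mem_nhdsWithin_iff] at h1
    obtain ⟨ε, hεp, hsub⟩ := h1
    exact ⟨ε, hεp, fun t ht hd => hsub ⟨Metric.mem_ball.2 hd, ht⟩⟩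
  choose ε hεpos hεgood using hε
  have hcov : Set.Icc a b ⊆ ⋃ u : Set.Icc a b, Metric.ball u.1 (ε u / 2) := fun t ht =>
    Set.mem_iUnion.2 ⟨⟨t, ht⟩, Metric.mem_ball_self (half_pos (hεpos _))⟩
  obtain ⟨T, hT⟩ := isCompact_Icc.elim_finite_subcover
    (fun u : Set.Icc a b => Metric.ball u.1 (ε u / 2)) (fun _ => Metric.isOpen_ball) hcov
  have hTne : T.Nonempty := by
    have ha : a ∈ Set.Icc a b := Set.left_mem_Icc.2 hab.le
    have := hT ha
    simp only [Set.mem_iUnion] at this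
    obtain ⟨u, hu, -⟩ := this
    exact ⟨u, hu⟩
  set δ : ℝ := T.inf' hTne (fun u => ε u / 2) with hδdef
  have hδpos : 0 < δ := (Finset.lt_inf'_iff hTne).2 fun u _ => half_pos (hεpos u)
  set Msup : ℝ := T.sup' hTne M with hMsupdef
  have hMsuppos : 0 < Msup := lt_of_lt_of_le (hMpos hTne.choose)
    (Finset.le_sup' M hTne.choose_spec)
  set C : ℝ := Msup * K with hCdef
  have hC0 : 0 ≤ C := mul_nonneg hMsuppos.le K.coe_nonneg
  -- base step
  have hbase : ∀ s ∈ Set.Icc a b, ∀ t ∈ Set.Icc a b, s < t → t - s ≤ δ →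
      LY.causal (f (γ s)) (f (γ t)) ∧ dist (f (γ s)) (f (γ t)) ≤ C * (t - s) := by
    intro s hs t ht hst hd
    have := hT hs
    simp only [Set.mem_iUnion] at this
    obtain ⟨u, huT, hsu⟩ := this
    rw [Metric.mem_ball] at hsu
    have hδu : δ ≤ ε u / 2 := Finset.inf'_le _ huT
    have hdts : dist t s = t - s := by
      rw [Real.dist_eq, abs_of_pos (by linarith)]
    have htu : dist t u.1 < ε u := by
      calc dist t u.1 ≤ dist t s + dist s u.1 := dist_triangle _ _ _
        _ < δ + ε u / 2 := by rw [hdts]; rcases lt_or_eq_of_le hd with h|h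
                              · exact add_lt_add_of_lt_of_lt h hsu
                              · rw [h]; exact add_lt_add_right hsu δ
        _ ≤ ε u / 2 + ε u / 2 := by linarith
        _ = ε u := by ring
    have hsu' : dist s u.1 < ε u := lt_of_lt_of_le hsu (by linarith [hεpos u])
    have hγs : γ s ∈ N u := hεgood u s hs hsu'
    have hγt : γ t ∈ N u := hεgood u t ht htu
    obtain ⟨hcaus, hdist⟩ := hgood u (γ s) hγs (γ t) hγt (hmono hs ht hst)
    refine ⟨hcaus, ?_⟩
    have hγdist : dist (γ s) (γ t) ≤ K * (t - s) := by
      have := hK.dist_le_mul s hs t ht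
      rwa [Real.dist_eq, abs_of_neg (by linarith), neg_sub] at this
    have hMu : M u ≤ Msup := Finset.le_sup' M huT
    calc dist (f (γ s)) (f (γ t)) ≤ M u * dist (γ s) (γ t) := hdist
      _ ≤ M u * (K * (t - s)) := by nlinarith [hMpos u, dist_nonneg (x := γ s) (y := γ t)]
      _ ≤ Msup * (K * (t - s)) := mul_le_mul_of_nonneg_right hMu
          (mul_nonneg K.coe_nonneg (by linarith))
      _ = Msup * K * (t - s) := by ring
  -- chain to global statements
  have hcausal : ∀ s ∈ Set.Icc a b, ∀ t ∈ Set.Icc a b, s < t →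
      LY.causal (f (γ s)) (f (γ t)) := by
    refine chain_lemma (P := fun s t => LY.causal (f (γ s)) (f (γ t))) hδpos ?_ ?_
    · intro u v w _ _ _ _ _ h1 h2
      exact LY.causal_trans h1 h2
    · intro u v hu hv huv hle
      exact (hbase u hu v hv huv hle).1
  have hlipb : ∀ s ∈ Set.Icc a b, ∀ t ∈ Set.Icc a b, s < t →
      dist (f (γ s)) (f (γ t)) ≤ C * (t - s) := by
    refine chain_lemma (P := fun s t => dist (f (γ s)) (f (γ t)) ≤ C * (t - s)) hδpos ?_ ?_
    · intro u v w _ _ _ huv hvw h1 h2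
      calc dist (f (γ u)) (f (γ w)) ≤
          dist (f (γ u)) (f (γ v)) + dist (f (γ v)) (f (γ w)) := dist_triangle _ _ _
        _ ≤ C * (v - u) + C * (w - v) := add_le_add h1 h2
        _ = C * (w - u) := by ring
    · intro u v hu hv huv hle
      exact (hbase u hu v hv huv hle).2
  have hlipschitz : LipschitzOnWith C.toNNReal (f ∘ γ) (Set.Icc a b) := by
    apply LipschitzOnWith.of_dist_le_mul
    intro x1 h1 x2 h2
    rcases lt_trichotomy x1 x2 with h | h | h
    · have := hlipb x1 h1 x2 h2 h
      calc dist ((f ∘ γ) x1) ((f ∘ γ) x2) ≤ C * (x2 - x1) := this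
        _ = C.toNNReal * dist x1 x2 := by
            rw [Real.coe_toNNReal _ hC0, Real.dist_eq, abs_of_neg (by linarith), neg_sub]
    · rw [h]; simp
    · have := hlipb x2 h2 x1 h1 h
      rw [dist_comm]
      calc dist ((f ∘ γ) x2) ((f ∘ γ) x1) ≤ C * (x1 - x2) := this
        _ = C.toNNReal * dist x1 x2 := by
            rw [Real.coe_toNNReal _ hC0, Real.dist_eq, abs_of_pos (by linarith)]
  -- scaling of the length
  have hc0 : (c : ℝ≥0∞) ≠ 0 := by exact_mod_cast hc.ne'
  have hscale : LY.tauLength (f ∘ γ) a b = (c : ℝ≥0∞) * LX.tauLength γ a b := by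
    unfold LorentzianPreLengthSpace.tauLength
    rw [ENNReal.mul_iInf_of_ne hc0 ENNReal.coe_ne_top]
    refine iInf_congr fun n => ?_
    rw [ENNReal.mul_iInf_of_ne hc0 ENNReal.coe_ne_top]
    refine iInf_congr fun t => ?_
    rw [Finset.mul_sum]
    exact Finset.sum_congr rfl fun i _ => hhom _ _
  refine ⟨⟨hab, ⟨C.toNNReal, hlipschitz⟩, ⟨s₀, hs₀, t₀, ht₀, fun h => hnecst (hinj h)⟩,
    fun s hs t ht hst => hcausal s hs t ht hst⟩, ?_, hscale⟩
  rw [hscale, hmax, ← hhom]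
end
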